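/- arXiv:1912.07042 — 5 statements merged into one kernel-verified Lean document; each statement's English description precedes it below -/
import Mathlib

section
/- Copycat property for reconfigurable semantics: let ρ : γ_0 →_R γ_1 →_R ⋯ →_R γ_s be a reconfigurable execution of a broadcast protocol B, with last configuration γ_s = (N, E, L). Then for every state q in the image of L and every node n^q ∈ N with L(n^q) = q, there exist t ∈ ℕ and a reconfigurable execution ρ' : γ'_0 →_R ⋯ →_R γ'_t with last configuration γ'_t = (N', E', L') such that |N'| = |N| + 1, there is an injection ι : N → N' with L'(ι(n)) = L(n) for every n ∈ N, and the extra node n_f ∈ N' \ ι(N) satisfies L'(n_f) = q and a_{ρ'}(n_f) = a_ρ(n^q). -/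
/-- A broadcast protocol over finite state set `Q` and finite message alphabet `M`.
`I` is the set of initial states, `br q m q'` means `(q, !!m, q') ∈ Δ` (a broadcast
transition) and `rcv q m q'` means `(q, ??m, q') ∈ Δ` (a reception transition).
The protocol is complete for receptions. -/
structure BroadcastProtocol (Q M : Type) [Fintype Q] [DecidableEq Q] [Fintype M] where
  I : Finset Q
  br : Q → M → Q → Prop
  rcv : Q → M → Q → Prop
  complete : ∀ q m, ∃ q', rcv q m q'

section Execs
variable {Q M : Type} [Fintype Q] [DecidableEq Q] [Fintype M]

/-- A reconfigurable execution of length `r` over the finite node type `ν`: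
`lab i v` is the state of node `v` in the `i`-th configuration, `edges i` is the
(symmetric, irreflexive) communication topology of the `i`-th configuration,
and in the `i`-th step node `sender i` broadcasts message `msg i` to its
neighbours; the topology may change arbitrarily at each step. -/
structure RExec (P : BroadcastProtocol Q M) (ν : Type) [Fintype ν] [DecidableEq ν]
    (r : ℕ) where
  lab : Fin (r + 1) → ν → Q
  edges : Fin (r + 1) → ν → ν → Prop
  edges_symm : ∀ i, Symmetric (edges i)
  edges_irrefl : ∀ i, Irreflexive (edges i)
  sender : Fin r → ν
  msg : Fin r → M
  init : ∀ v, lab 0 v ∈ P.I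
  step_br : ∀ i : Fin r, P.br (lab i.castSucc (sender i)) (msg i) (lab i.succ (sender i))
  step_rcv : ∀ i : Fin r, ∀ v, v ≠ sender i →
    (edges i.castSucc (sender i) v → P.rcv (lab i.castSucc v) (msg i) (lab i.succ v)) ∧
    (¬ edges i.castSucc (sender i) v → lab i.succ v = lab i.castSucc v)

namespace RExec

variable {P : BroadcastProtocol Q M} {ν : Type} [Fintype ν] [DecidableEq ν] {r : ℕ}

/-- Labelling of the last configuration. -/
def lastLab (ρ : RExec P ν r) : ν → Q := ρ.lab (Fin.last r)

/-- The execution covers `F` if a node of the last configuration is labelled in `F`. -/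
def Covers (ρ : RExec P ν r) (F : Set Q) : Prop := ∃ v, ρ.lastLab v ∈ F

/-- The active length of node `v`: the number of steps in which `v` broadcasts. -/
def activeLen (ρ : RExec P ν r) (v : ν) : ℕ :=
  (Finset.univ.filter fun i : Fin r => ρ.sender i = v).card

end RExec

end Execs

section Aux
variable {Q M : Type} [Fintype Q] [DecidableEq Q] [Fintype M]
namespace RExec

variable {P : BroadcastProtocol Q M} {ν : Type} [Fintype ν] [DecidableEq ν] {r t : ℕ}

/-- Append one step to an execution. The topology used for the new step is `E`
(reconfigurable semantics: the topology of the last configuration of `ρ` is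
unconstrained, so we may pick it freshly). -/
def snoc (ρ : RExec P ν t) (s : ν) (m : M) (E : ν → ν → Prop)
    (hsym : Symmetric E) (hirr : Irreflexive E) (L' : ν → Q)
    (hbr : P.br (ρ.lastLab s) m (L' s))
    (hrcv : ∀ v, v ≠ s → (E s v → P.rcv (ρ.lastLab v) m (L' v)) ∧
      (¬ E s v → L' v = ρ.lastLab v)) :
    RExec P ν (t + 1) where
  lab := Fin.snoc ρ.lab L'
  edges := Fin.snoc (Fin.snoc (fun i : Fin t => ρ.edges i.castSucc) E) E
  edges_symm := by
    intro i
    refine Fin.lastCases ?_ (fun j => ?_) i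
    · simpa using hsym
    · simp only [Fin.snoc_castSucc]
      refine Fin.lastCases ?_ (fun k => ?_) j
      · simpa using hsym
      · simpa using ρ.edges_symm k.castSucc
  edges_irrefl := by
    intro i
    refine Fin.lastCases ?_ (fun j => ?_) i
    · simpa using hirr
    · simp only [Fin.snoc_castSucc]
      refine Fin.lastCases ?_ (fun k => ?_) j
      · simpa using hirr
      · simpa using ρ.edges_irrefl k.castSucc
  sender := Fin.snoc ρ.sender s
  msg := Fin.snoc ρ.msg m
  init := by
    intro v
    rw [← Fin.castSucc_zero, Fin.snoc_castSucc]
    exact ρ.init v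
  step_br := by
    intro i
    refine Fin.lastCases ?_ (fun j => ?_) i
    · simpa [Fin.succ_last, RExec.lastLab] using hbr
    · simpa [-Fin.castSucc_succ, Fin.succ_castSucc] using ρ.step_br j
  step_rcv := by
    intro i
    refine Fin.lastCases ?_ (fun j => ?_) i
    · intro v hv
      simp only [Fin.snoc_last] at hv
      simpa [Fin.succ_last, RExec.lastLab] using hrcv v hv
    · intro v hv
      simp only [Fin.snoc_castSucc] at hv
      simpa [-Fin.castSucc_succ, Fin.succ_castSucc] using ρ.step_rcv j v hv

@[simp] lemma lastLab_snoc (ρ : RExec P ν t) (s m E hsym hirr L' hbr hrcv) :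
    (ρ.snoc s m E hsym hirr L' hbr hrcv).lastLab = L' := by
  funext v
  simp [RExec.lastLab, RExec.snoc]

lemma activeLen_snoc (ρ : RExec P ν t) (s m E hsym hirr L' hbr hrcv) (v : ν) :
    (ρ.snoc s m E hsym hirr L' hbr hrcv).activeLen v =
      ρ.activeLen v + (if s = v then 1 else 0) := by
  unfold RExec.activeLen
  rw [Finset.card_filter, Finset.card_filter]
  have hsend : (ρ.snoc s m E hsym hirr L' hbr hrcv).sender = Fin.snoc ρ.sender s := rfl
  rw [hsend, Fin.sum_univ_castSucc]
  simp

/-- Drop the last step of an execution. -/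
def restrict (ρ : RExec P ν (r + 1)) : RExec P ν r where
  lab i := ρ.lab i.castSucc
  edges i := ρ.edges i.castSucc
  edges_symm i := ρ.edges_symm _
  edges_irrefl i := ρ.edges_irrefl _
  sender i := ρ.sender i.castSucc
  msg i := ρ.msg i.castSucc
  init v := by simpa using ρ.init v
  step_br i := by simpa [-Fin.castSucc_succ, Fin.succ_castSucc] using ρ.step_br i.castSucc
  step_rcv i v hv := by
    simpa [-Fin.castSucc_succ, Fin.succ_castSucc] using ρ.step_rcv i.castSucc v hv

@[simp] lemma lastLab_restrict (ρ : RExec P ν (r + 1)) :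
    ρ.restrict.lastLab = ρ.lab (Fin.last r).castSucc := rfl

lemma activeLen_restrict (ρ : RExec P ν (r + 1)) (v : ν) :
    ρ.activeLen v = ρ.restrict.activeLen v +
      (if ρ.sender (Fin.last r) = v then 1 else 0) := by
  unfold RExec.activeLen
  rw [Finset.card_filter, Finset.card_filter, Fin.sum_univ_castSucc]
  have hsend : ρ.restrict.sender = fun i : Fin r => ρ.sender i.castSucc := rfl
  simp [hsend]

end RExec

theorem copycat_aux {Q M : Type} [Fintype Q] [DecidableEq Q] [Fintype M]
    (P : BroadcastProtocol Q M) (ν : Type) [Fintype ν] [DecidableEq ν] (nq : ν) :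
    ∀ (r : ℕ) (ρ : RExec P ν r),
      ∃ (t : ℕ) (ρ' : RExec P (Option ν) t),
        (∀ v : ν, ρ'.lastLab (some v) = ρ.lastLab v) ∧
        ρ'.lastLab none = ρ.lastLab nq ∧
        ρ'.activeLen none = ρ.activeLen nq := by
  intro r
  induction r with
  | zero =>
    intro ρ
    refine ⟨0, ⟨fun _ w => match w with | none => ρ.lab 0 nq | some v => ρ.lab 0 v,
      fun _ _ _ => False, fun _ _ _ h => h.elim, fun _ _ h => h,
      Fin.elim0, Fin.elim0, ?_, fun i => i.elim0, fun i => i.elim0⟩, ?_, ?_, ?_⟩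
    · intro w
      cases w <;> exact ρ.init _
    · intro v; rfl
    · rfl
    · simp [RExec.activeLen]
  | succ r ih =>
    intro ρ
    obtain ⟨t, ρ', h1, h2, h3⟩ := ih ρ.restrict
    set s := ρ.sender (Fin.last r) with hsdef
    set m := ρ.msg (Fin.last r) with hmdef
    have hlastsucc : (Fin.last r).succ = Fin.last (r + 1) := Fin.succ_last r
    have hbr0 := ρ.step_br (Fin.last r)
    by_cases hs : s = nq
    · -- nq broadcasts: first the copy broadcasts with no neighbours, then nq.
      -- Step A: copy broadcasts.
      have hbrA : P.br (ρ'.lastLab none) m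
          ((fun w => match w with | none => ρ.lastLab nq | some v => ρ'.lastLab (some v)) none) := by
        rw [h2, RExec.lastLab_restrict]
        rw [← hs]
        simpa [RExec.lastLab, hlastsucc, ← hsdef, ← hmdef] using hbr0
      set ρA := ρ'.snoc none m (fun _ _ => False) (fun _ _ h => h.elim) (fun _ h => h)
        (fun w => match w with | none => ρ.lastLab nq | some v => ρ'.lastLab (some v))
        hbrA
        (fun w hw => ⟨fun h => h.elim, fun _ => by
          cases w with
          | none => exact absurd rfl hw
          | some v => rfl⟩) with hρA
      have hlastA : ρA.lastLab = fun w => match w with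
          | none => ρ.lastLab nq | some v => ρ'.lastLab (some v) :=
        RExec.lastLab_snoc ..
      -- Step B: nq broadcasts as in ρ.
      have EBsym : Symmetric (fun x y : Option ν => match x, y with
          | some a, some b => ρ.edges (Fin.last r).castSucc a b
          | _, _ => False) := by
        intro x y hxy
        cases x <;> cases y <;> simp_all
        exact ρ.edges_symm _ hxy
      have EBirr : Irreflexive (fun x y : Option ν => match x, y with
          | some a, some b => ρ.edges (Fin.last r).castSucc a b
          | _, _ => False) := by
        intro x hx
        cases x with
        | none => exact hx
        | some a => exact ρ.edges_irrefl _ a hx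
      have hbrB : P.br (ρA.lastLab (some nq)) m
          ((fun w => match w with | none => ρ.lastLab nq | some v => ρ.lastLab v) (some nq)) := by
        rw [hlastA]
        show P.br (ρ'.lastLab (some nq)) m (ρ.lastLab nq)
        rw [h1, RExec.lastLab_restrict, ← hs]
        simpa [RExec.lastLab, hlastsucc, ← hsdef, ← hmdef] using hbr0
      have hrcvB : ∀ w : Option ν, w ≠ some nq →
          ((fun x y : Option ν => match x, y with
            | some a, some b => ρ.edges (Fin.last r).castSucc a b
            | _, _ => False) (some nq) w →
            P.rcv (ρA.lastLab w) m
              ((fun w => match w with | none => ρ.lastLab nq | some v => ρ.lastLab v) w)) ∧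
          (¬ (fun x y : Option ν => match x, y with
            | some a, some b => ρ.edges (Fin.last r).castSucc a b
            | _, _ => False) (some nq) w →
            (fun w => match w with | none => ρ.lastLab nq | some v => ρ.lastLab v) w
              = ρA.lastLab w) := by
        intro w hw
        cases w with
        | none =>
          exact ⟨fun h => h.elim, fun _ => by rw [hlastA]⟩
        | some v =>
          have hvnq : v ≠ nq := fun h => hw (by rw [h])
          have hstep := ρ.step_rcv (Fin.last r) v (by rw [← hsdef, hs]; exact hvnq)
          rw [← hsdef, hs] at hstep
          constructor
          · intro hE
            have := hstep.1 hE
            rw [hlastA]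
            show P.rcv (ρ'.lastLab (some v)) m (ρ.lastLab v)
            rw [h1, RExec.lastLab_restrict]
            simpa [RExec.lastLab, hlastsucc, ← hmdef] using this
          · intro hE
            have := hstep.2 hE
            rw [hlastA]
            show ρ.lastLab v = ρ'.lastLab (some v)
            rw [h1, RExec.lastLab_restrict]
            simpa [RExec.lastLab, hlastsucc] using this
      refine ⟨t + 1 + 1, ρA.snoc (some nq) m _ EBsym EBirr _ hbrB hrcvB, ?_, ?_, ?_⟩
      · intro v; rw [RExec.lastLab_snoc]
      · rw [RExec.lastLab_snoc]
      · rw [RExec.activeLen_snoc, hρA]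
        erw [RExec.activeLen_snoc]
        rw [ρ.activeLen_restrict nq, h3, ← hsdef, hs]
        simp
    · -- the sender of the last step is not nq: copy just receives along with nq.
      have hnqs : ∀ v : ν, v ≠ s → _ := fun v h => ρ.step_rcv (Fin.last r) v (by rw [← hsdef]; exact h)
      set EC : Option ν → Option ν → Prop := fun x y => match x, y with
        | some a, some b => ρ.edges (Fin.last r).castSucc a b
        | some a, none => a = s ∧ ρ.edges (Fin.last r).castSucc s nq
        | none, some b => b = s ∧ ρ.edges (Fin.last r).castSucc s nq
        | none, none => False with hEC
      have ECsym : Symmetric EC := by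
        intro x y hxy
        cases x <;> cases y <;> simp_all [hEC]
        exact ρ.edges_symm _ hxy
      have ECirr : Irreflexive EC := by
        intro x hx
        cases x with
        | none => exact hx
        | some a => exact ρ.edges_irrefl _ a hx
      have hbrC : P.br (ρ'.lastLab (some s)) m
          ((fun w => match w with | none => ρ.lastLab nq | some v => ρ.lastLab v) (some s)) := by
        show P.br (ρ'.lastLab (some s)) m (ρ.lastLab s)
        rw [h1, RExec.lastLab_restrict]
        simpa [RExec.lastLab, hlastsucc, ← hsdef, ← hmdef] using hbr0
      have hrcvC : ∀ w : Option ν, w ≠ some s →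
          (EC (some s) w → P.rcv (ρ'.lastLab w) m
            ((fun w => match w with | none => ρ.lastLab nq | some v => ρ.lastLab v) w)) ∧
          (¬ EC (some s) w →
            (fun w => match w with | none => ρ.lastLab nq | some v => ρ.lastLab v) w
              = ρ'.lastLab w) := by
        intro w hw
        cases w with
        | none =>
          have hstep := hnqs nq (fun h => hs h.symm)
          constructor
          · intro hE
            have := hstep.1 hE.2
            show P.rcv (ρ'.lastLab none) m (ρ.lastLab nq)
            rw [h2, RExec.lastLab_restrict]
            simpa [RExec.lastLab, hlastsucc, ← hmdef] using this
          · intro hE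
            have hnE : ¬ ρ.edges (Fin.last r).castSucc s nq := fun h => hE ⟨rfl, h⟩
            have := hstep.2 hnE
            show ρ.lastLab nq = ρ'.lastLab none
            rw [h2, RExec.lastLab_restrict]
            simpa [RExec.lastLab, hlastsucc] using this
        | some v =>
          have hvs : v ≠ s := fun h => hw (by rw [h])
          have hstep := hnqs v hvs
          constructor
          · intro hE
            have := hstep.1 hE
            show P.rcv (ρ'.lastLab (some v)) m (ρ.lastLab v)
            rw [h1, RExec.lastLab_restrict]
            simpa [RExec.lastLab, hlastsucc, ← hmdef] using this
          · intro hE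
            have := hstep.2 hE
            show ρ.lastLab v = ρ'.lastLab (some v)
            rw [h1, RExec.lastLab_restrict]
            simpa [RExec.lastLab, hlastsucc] using this
      refine ⟨t + 1, ρ'.snoc (some s) m EC ECsym ECirr _ hbrC hrcvC, ?_, ?_, ?_⟩
      · intro v; rw [RExec.lastLab_snoc]
      · rw [RExec.lastLab_snoc]
      · rw [RExec.activeLen_snoc, ρ.activeLen_restrict nq, h3, ← hsdef]
        simp [hs]

end Aux

/-- **Copycat property for reconfigurable semantics.** Given a reconfigurable
execution `ρ` of length `r` whose last configuration labels the node `nq` with the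
state `q`, there is a reconfigurable execution `ρ'` of some length `t` over the node
set `Option ν` (which has one more node), such that the injection `some : ν → Option ν`
preserves the final labels, the extra node `none` ends labelled `q`, and the active
length of the extra node in `ρ'` equals the active length of `nq` in `ρ`. -/
theorem copycat_reconfigurable
    {Q M : Type} [Fintype Q] [DecidableEq Q] [Fintype M]
    (P : BroadcastProtocol Q M) (ν : Type) [Fintype ν] [DecidableEq ν]
    (r : ℕ) (ρ : RExec P ν r) (q : Q) (nq : ν) (hnq : ρ.lastLab nq = q) :
    ∃ (t : ℕ) (ρ' : RExec P (Option ν) t),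
      Fintype.card (Option ν) = Fintype.card ν + 1 ∧
      Function.Injective (some : ν → Option ν) ∧
      (∀ n : ν, ρ'.lastLab (some n) = ρ.lastLab n) ∧
      ρ'.lastLab none = q ∧
      ρ'.activeLen none = ρ.activeLen nq := by
  obtain ⟨t, ρ', h1, h2, h3⟩ := copycat_aux P ν nq r ρ
  exact ⟨t, ρ', Fintype.card_option, Option.some_injective ν, h1, hnq ▸ h2, h3⟩
end

section
/- Correctness of the saturation construction for reconfigurable networks: for every broadcast protocol B = (Q, I, Σ, Δ) and every state q ∈ Q, q belongs to the saturation set S(B) if and only if there exists a reconfigurable execution of B covering {q}. Consequently, for any F ⊆ Q, there exists a reconfigurable execution covering F if and only if F ∩ S(B) ≠ ∅. -/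
/-- The saturation set `S(B)`: the least subset of `Q` containing `I` and closed
under the broadcast and reception rules. -/
inductive Sat {Q M : Type} [Fintype Q] [DecidableEq Q] [Fintype M]
    (P : BroadcastProtocol Q M) : Q → Prop
  | base (q : Q) : q ∈ P.I → Sat P q
  | broadcast (q₁ : Q) (m : M) (q₂ : Q) : Sat P q₁ → P.br q₁ m q₂ → Sat P q₂
  | reception (q₁ : Q) (m : M) (q₂ p₁ p₂ : Q) :
      Sat P q₁ → Sat P q₂ → Sat P p₁ → P.br q₁ m q₂ → P.rcv p₁ m p₂ → Sat P p₂


section SatAux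

variable {Q M : Type} [Fintype Q] [DecidableEq Q] [Fintype M] (P : BroadcastProtocol Q M)

/-- One abstract reconfigurable step on labellings: some node `v` broadcasts `m`,
every other node either receives `m` or is unchanged. -/
def PStep {ν : Type} (L L' : ν → Q) : Prop :=
  ∃ v m, P.br (L v) m (L' v) ∧ ∀ w, w ≠ v → P.rcv (L w) m (L' w) ∨ L' w = L w

/-- Reachable labellings. -/
inductive Reach : ∀ k : ℕ, (Fin k → Q) → Prop
  | base (k : ℕ) (L : Fin k → Q) : (∀ v, L v ∈ P.I) → Reach k L
  | step (k : ℕ) (L L' : Fin k → Q) : Reach k L → PStep P L L' → Reach k L'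

variable {P}

lemma pstep_append_left {k1 k2 : ℕ} {L1 L1' : Fin k1 → Q} (L2 : Fin k2 → Q)
    (h : PStep P L1 L1') : PStep P (Fin.append L1 L2) (Fin.append L1' L2) := by
  obtain ⟨v, m, hbr, hrest⟩ := h
  refine ⟨Fin.castAdd k2 v, m, by simpa [Fin.append_left] using hbr, ?_⟩
  intro w
  refine Fin.addCases (fun w1 hw => ?_) (fun w2 _ => ?_) w
  · have hw1 : w1 ≠ v := fun he => hw (by rw [he])
    simpa [Fin.append_left] using hrest w1 hw1
  · right; simp [Fin.append_right]

lemma pstep_append_right {k1 k2 : ℕ} (L1 : Fin k1 → Q) {L2 L2' : Fin k2 → Q}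
    (h : PStep P L2 L2') : PStep P (Fin.append L1 L2) (Fin.append L1 L2') := by
  obtain ⟨v, m, hbr, hrest⟩ := h
  refine ⟨Fin.natAdd k1 v, m, by simpa [Fin.append_right] using hbr, ?_⟩
  intro w
  refine Fin.addCases (fun w1 _ => ?_) (fun w2 hw => ?_) w
  · right; simp [Fin.append_left]
  · have hw2 : w2 ≠ v := fun he => hw (by rw [he])
    simpa [Fin.append_right] using hrest w2 hw2

lemma Reach.comp {k1 k2 : ℕ} {L1 : Fin k1 → Q} {L2 : Fin k2 → Q}
    (h1 : Reach P k1 L1) (h2 : Reach P k2 L2) :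
    Reach P (k1 + k2) (Fin.append L1 L2) := by
  induction h2 with
  | base L hI =>
      induction h1 with
      | base L' hI' =>
          refine .base _ _ (fun v => ?_)
          refine Fin.addCases (fun v1 => ?_) (fun v2 => ?_) v
          · simpa [Fin.append_left] using hI' v1
          · simpa [Fin.append_right] using hI v2
      | step L L'' hR hs ih => exact .step _ _ _ ih (pstep_append_left _ hs)
  | step L L'' hR hs ih => exact .step _ _ _ ih (pstep_append_right _ hs)

lemma reach_exec {k : ℕ} {L : Fin k → Q} (h : Reach P k L) :
    ∃ (r : ℕ) (ρ : RExec P (Fin k) r), ρ.lastLab = L := by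
  induction h with
  | base L hI =>
      exact ⟨0, ⟨fun _ => L, fun _ _ _ => False, fun _ _ _ h => h, fun _ _ h => h,
        Fin.elim0, Fin.elim0, hI, fun i => i.elim0, fun i => i.elim0⟩, rfl⟩
  | step L L' hR hs ih =>
      obtain ⟨r, ρ, hlast⟩ := ih
      obtain ⟨v, m, hbr, hrest⟩ := hs
      classical
      set E : Fin k → Fin k → Prop :=
        fun a b => (a = v ∧ b ≠ v ∧ L' b ≠ L b) ∨ (b = v ∧ a ≠ v ∧ L' a ≠ L a) with hE
      have Esymm : Symmetric E := by
        intro a b h; rcases h with h | h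
        · exact Or.inr h
        · exact Or.inl h
      have Eirr : Irreflexive E := by
        rintro a (⟨h1, h2, _⟩ | ⟨h1, h2, _⟩) <;> exact h2 h1
      refine ⟨r + 1, ⟨Fin.snoc ρ.lab L',
        Fin.snoc (Function.update ρ.edges (Fin.last r) E) (fun _ _ => False),
        ?_, ?_, Fin.snoc ρ.sender v, Fin.snoc ρ.msg m, ?_, ?_, ?_⟩, ?_⟩
      · -- symm
        intro i
        induction i using Fin.lastCases with
        | last => simp only [Fin.snoc_last]; intro a b h; exact h
        | cast j =>
            simp only [Fin.snoc_castSucc]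
            by_cases hj : j = Fin.last r
            · subst hj; simpa [Function.update_self] using Esymm
            · simpa [Function.update_of_ne hj] using ρ.edges_symm j
      · -- irrefl
        intro i
        induction i using Fin.lastCases with
        | last => simp only [Fin.snoc_last]; intro a h; exact h
        | cast j =>
            simp only [Fin.snoc_castSucc]
            by_cases hj : j = Fin.last r
            · subst hj; simpa [Function.update_self] using Eirr
            · simpa [Function.update_of_ne hj] using ρ.edges_irrefl j
      · -- init
        intro w
        have h0 : (0 : Fin (r + 2)) = Fin.castSucc (0 : Fin (r + 1)) := rfl
        rw [h0, Fin.snoc_castSucc]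
        exact ρ.init w
      · -- step_br
        intro i
        induction i using Fin.lastCases with
        | last =>
            simp only [Fin.snoc_last, Fin.succ_last, Fin.snoc_castSucc]
            rw [show ρ.lab (Fin.last r) = ρ.lastLab from rfl, hlast]
            exact hbr
        | cast j =>
            simp only [Fin.snoc_castSucc, Fin.succ_castSucc]
            exact ρ.step_br j
      · -- step_rcv
        intro i
        induction i using Fin.lastCases with
        | last =>
            intro w hw
            simp only [Fin.snoc_last, Fin.succ_last, Fin.snoc_castSucc,
              Function.update_self] at hw ⊢
            rw [show ρ.lab (Fin.last r) = ρ.lastLab from rfl, hlast]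
            constructor
            · rintro (⟨_, _, hne⟩ | ⟨hwv, _, _⟩)
              · rcases hrest w hw with hr | he
                · exact hr
                · exact absurd he hne
              · exact absurd hwv hw
            · intro hne
              by_contra hne'
              exact hne (Or.inl ⟨rfl, hw, hne'⟩)
        | cast j =>
            intro w hw
            simp only [Fin.snoc_castSucc, Fin.succ_castSucc] at hw ⊢
            have hj : j.castSucc ≠ Fin.last r := by
              simp [Fin.ext_iff]; omega
            rw [Function.update_of_ne hj]
            exact ρ.step_rcv j w hw
      · -- lastLab
        simp [RExec.lastLab, Fin.snoc_last]

lemma exec_sound {k r : ℕ} (ρ : RExec P (Fin k) r) :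
    ∀ (i : Fin (r + 1)) (v : Fin k), Sat P (ρ.lab i v) := by
  intro i
  induction i using Fin.induction with
  | zero => exact fun v => Sat.base _ (ρ.init v)
  | succ j ih =>
      intro v
      by_cases hv : v = ρ.sender j
      · rw [hv]
        exact Sat.broadcast _ (ρ.msg j) _ (ih _) (ρ.step_br j)
      · obtain ⟨h1, h2⟩ := ρ.step_rcv j v hv
        by_cases he : ρ.edges j.castSucc (ρ.sender j) v
        · exact Sat.reception (ρ.lab j.castSucc (ρ.sender j)) (ρ.msg j)
            (ρ.lab j.succ (ρ.sender j)) _ _ (ih _)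
            (Sat.broadcast _ (ρ.msg j) _ (ih _) (ρ.step_br j)) (ih v)
            (ρ.step_br j) (h1 he)
        · rw [h2 he]; exact ih v

lemma sat_reach {q : Q} (h : Sat P q) :
    ∃ (k : ℕ) (L : Fin k → Q) (v : Fin k), Reach P k L ∧ L v = q := by
  classical
  induction h with
  | base q hq => exact ⟨1, fun _ => q, 0, .base _ _ (fun _ => hq), rfl⟩
  | broadcast q1 m q2 h1 hbr ih =>
      obtain ⟨k, L, v, hR, hL⟩ := ih
      refine ⟨k, Function.update L v q2, v, .step _ _ _ hR ⟨v, m, ?_, ?_⟩,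
        Function.update_self ..⟩
      · rw [Function.update_self, hL]; exact hbr
      · intro w hw; right; rw [Function.update_of_ne hw]
  | reception q1 m q2 p1 p2 h1 h2 h3 hbr hrcv ih1 ih2 ih3 =>
      obtain ⟨k1, L1, v1, hR1, hL1⟩ := ih1
      obtain ⟨k3, L3, v3, hR3, hL3⟩ := ih3
      have hcomp := Reach.comp hR1 hR3
      set L : Fin (k1 + k3) → Q := Fin.append L1 L3 with hLdef
      set s : Fin (k1 + k3) := Fin.castAdd k3 v1 with hs
      set t : Fin (k1 + k3) := Fin.natAdd k1 v3 with ht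
      have hst : t ≠ s := by
        have := v1.isLt
        simp only [hs, ht, Fin.ne_iff_vne, Fin.coe_castAdd, Fin.coe_natAdd]
        omega
      set L' : Fin (k1 + k3) → Q :=
        Function.update (Function.update L s q2) t p2 with hL'
      refine ⟨k1 + k3, L', t, .step _ _ _ hcomp ⟨s, m, ?_, ?_⟩,
        Function.update_self ..⟩
      · have h1' : L' s = q2 := by
          rw [hL', Function.update_of_ne hst.symm, Function.update_self]
        have h2' : L s = q1 := by rw [hLdef, hs, Fin.append_left, hL1]
        rw [h1', h2']; exact hbr
      · intro w hw
        by_cases hwt : w = t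
        · left
          rw [hwt]
          have h1' : L' t = p2 := Function.update_self ..
          have h2' : L t = p1 := by rw [hLdef, ht, Fin.append_right, hL3]
          rw [h1', h2']; exact hrcv
        · right
          rw [hL', Function.update_of_ne hwt, Function.update_of_ne hw]

end SatAux

/-- **Correctness of the saturation construction for reconfigurable networks.**
A state `q` belongs to the saturation set `S(B)` iff some reconfigurable execution
covers `{q}`; consequently, a set `F` of states is coverable by a reconfigurable
execution iff `F` meets the saturation set. -/
theorem saturation_correct_reconfigurable
    {Q M : Type} [Fintype Q] [DecidableEq Q] [Fintype M] (P : BroadcastProtocol Q M) :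
    (∀ q : Q, Sat P q ↔ ∃ (k r : ℕ) (ρ : RExec P (Fin k) r), ρ.Covers {q}) ∧
    (∀ F : Set Q,
      (∃ (k r : ℕ) (ρ : RExec P (Fin k) r), ρ.Covers F) ↔ ∃ q ∈ F, Sat P q) := by
  classical
  have main : ∀ q : Q, Sat P q ↔ ∃ (k r : ℕ) (ρ : RExec P (Fin k) r), ρ.Covers {q} := by
    intro q
    constructor
    · intro h
      obtain ⟨k, L, v, hR, hL⟩ := sat_reach h
      obtain ⟨r, ρ, hlast⟩ := reach_exec hR
      exact ⟨k, r, ρ, v, by rw [hlast, hL]; rfl⟩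
    · rintro ⟨k, r, ρ, v, hv⟩
      have : ρ.lastLab v = q := hv
      exact this ▸ exec_sound ρ (Fin.last r) v
  refine ⟨main, fun F => ?_⟩
  constructor
  · rintro ⟨k, r, ρ, v, hv⟩
    exact ⟨ρ.lastLab v, hv, exec_sound ρ (Fin.last r) v⟩
  · rintro ⟨q, hqF, hq⟩
    obtain ⟨k, r, ρ, v, hv⟩ := (main q).1 hq
    exact ⟨k, r, ρ, v, by rw [show ρ.lastLab v = q from hv]; exact hqF⟩
end

section
/- Upper bounds on cutoff and covering length for reconfigurable networks: let B = (Q, I, Σ, Δ) be a broadcast protocol and F ⊆ Q. If there exists a reconfigurable execution of B covering F, then there exists a reconfigurable execution ρ covering F with size |ρ| ≤ 2|Q| and length ‖ρ‖ ≤ 2|Q|². -/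
set_option linter.unusedSectionVars false
set_option linter.unusedVariables false

section Work
variable {Q M : Type} [Fintype Q] [DecidableEq Q] [Fintype M] (P : BroadcastProtocol Q M)

/-- Saturation: the set of coverable states (over-approximation closure). -/
inductive Sat_s3 : Q → Prop
  | base {q} : q ∈ P.I → Sat_s3 q
  | brc {q m q'} : Sat_s3 q → P.br q m q' → Sat_s3 q'
  | rcvc {q m q' e w} : Sat_s3 q → Sat_s3 e → P.br e m w → P.rcv q m q' → Sat_s3 q'

lemma sat_lab {ν} [Fintype ν] [DecidableEq ν] {r} (ρ : RExec P ν r) :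
    ∀ i : Fin (r+1), ∀ v, Sat_s3 P (ρ.lab i v) := by
  intro i
  induction i using Fin.induction with
  | zero => intro v; exact Sat_s3.base (ρ.init v)
  | succ i ih =>
    intro v
    by_cases hv : v = ρ.sender i
    · subst hv; exact Sat_s3.brc (ih _) (ρ.step_br i)
    · obtain ⟨h1, h2⟩ := ρ.step_rcv i v hv
      by_cases he : ρ.edges i.castSucc (ρ.sender i) v
      · exact Sat_s3.rcvc (ih v) (ih (ρ.sender i)) (ρ.step_br i) (h1 he)
      · rw [h2 he]; exact ih v

/-- `x` is derivable in one step from states in `pre` (or initial). -/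
def GoodAt (pre : Q → Prop) (x : Q) : Prop :=
  x ∈ P.I ∨ (∃ p m, pre p ∧ P.br p m x) ∨
    (∃ p e m w, pre p ∧ pre e ∧ P.rcv p m x ∧ P.br e m w)

lemma GoodAt.mono {pre pre' : Q → Prop} (h : ∀ y, pre y → pre' y) {x} :
    GoodAt P pre x → GoodAt P pre' x := by
  rintro (h1 | ⟨p, m, hp, hb⟩ | ⟨p, e, m, w, hp, he, hr, hb⟩)
  · exact Or.inl h1
  · exact Or.inr (Or.inl ⟨p, m, h p hp, hb⟩)
  · exact Or.inr (Or.inr ⟨p, e, m, w, h p hp, h e he, hr, hb⟩)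

def GoodFrom (pre : Q → Prop) : List Q → Prop
  | [] => True
  | x :: rest => GoodAt P pre x ∧ GoodFrom (fun y => pre y ∨ y = x) rest

def Good (l : List Q) : Prop := GoodFrom P (fun _ => False) l

lemma goodFrom_mono : ∀ (l : List Q) {pre pre' : Q → Prop}, (∀ y, pre y → pre' y) →
    GoodFrom P pre l → GoodFrom P pre' l := by
  intro l
  induction l with
  | nil => intro _ _ _ _; trivial
  | cons x rest ih =>
    intro pre pre' hmono ⟨h1, h2⟩
    exact ⟨h1.mono P hmono, ih (fun y hy => hy.imp (hmono y) id) h2⟩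

lemma goodFrom_append : ∀ (l : List Q) {pre : Q → Prop} {x : Q},
    GoodFrom P pre l → GoodAt P (fun y => pre y ∨ y ∈ l) x → GoodFrom P pre (l ++ [x]) := by
  intro l
  induction l with
  | nil =>
    intro pre x _ hx
    exact ⟨hx.mono P (fun y hy => by simpa using hy), trivial⟩
  | cons z rest ih =>
    intro pre x ⟨h1, h2⟩ hx
    refine ⟨h1, ih h2 (hx.mono P ?_)⟩
    intro y hy
    rcases hy with hy | hy
    · exact Or.inl (Or.inl hy)
    · simp only [List.mem_cons] at hy
      rcases hy with rfl | hy
      · exact Or.inl (Or.inr rfl)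
      · exact Or.inr hy

def insert' (acc : List Q) (x : Q) : List Q := if x ∈ acc then acc else acc ++ [x]

def insertAll (acc : List Q) (l : List Q) : List Q := l.foldl insert' acc

lemma subset_insert' (acc : List Q) (x : Q) : ∀ y ∈ acc, y ∈ insert' acc x := by
  intro y hy; unfold insert'; split <;> simp [hy]

lemma mem_insert' (acc : List Q) (x : Q) : x ∈ insert' acc x := by
  unfold insert'; split <;> simp_all

lemma subset_insertAll (l : List Q) : ∀ (acc : List Q), ∀ y ∈ acc, y ∈ insertAll acc l := by
  induction l with
  | nil => intro acc y hy; exact hy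
  | cons x rest ih =>
    intro acc y hy
    exact ih (insert' acc x) y (subset_insert' acc x y hy)

lemma nodup_insert' {acc : List Q} (h : acc.Nodup) (x : Q) : (insert' acc x).Nodup := by
  unfold insert'; split
  · exact h
  · simp_all [List.nodup_append]
    rintro a ha rfl
    contradiction

lemma good_insert' {acc : List Q} {x : Q} (h : Good P acc) (hx : GoodAt P (· ∈ acc) x) :
    Good P (insert' acc x) := by
  unfold insert'; split
  · exact h
  · exact goodFrom_append P acc h (hx.mono P (fun y hy => Or.inr hy))

lemma good_insertAll : ∀ (l : List Q) (acc : List Q) (pre : Q → Prop),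
    Good P acc → acc.Nodup → GoodFrom P pre l → (∀ y, pre y → y ∈ acc) →
    Good P (insertAll acc l) ∧ (insertAll acc l).Nodup ∧ ∀ y ∈ l, y ∈ insertAll acc l := by
  intro l
  induction l with
  | nil => intro acc pre hg hnd _ _; exact ⟨hg, hnd, by simp⟩
  | cons x rest ih =>
    intro acc pre hg hnd ⟨hx, hrest⟩ hsub
    have hg' : Good P (insert' acc x) :=
      good_insert' P hg (hx.mono P (fun y hy => hsub y hy))
    have hnd' := nodup_insert' hnd x
    have hsub' : ∀ y, (pre y ∨ y = x) → y ∈ insert' acc x := by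
      rintro y (hy | rfl)
      · exact subset_insert' acc x y (hsub y hy)
      · exact mem_insert' acc _
    obtain ⟨a, b, c⟩ := ih (insert' acc x) _ hg' hnd' hrest hsub'
    refine ⟨a, b, ?_⟩
    intro y hy
    rcases List.mem_cons.mp hy with rfl | hy
    · exact subset_insertAll rest (insert' acc y) y (mem_insert' acc y)
    · exact c y hy

lemma sat_good {q : Q} (h : Sat_s3 P q) : ∃ l : List Q, Good P l ∧ l.Nodup ∧ q ∈ l := by
  induction h with
  | @base q hq =>
    exact ⟨[q], ⟨Or.inl hq, trivial⟩, by simp, by simp⟩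
  | @brc q m q' hs hb ih =>
    obtain ⟨l, hg, hnd, hq⟩ := ih
    have hgood : GoodFrom P (· ∈ l) [q'] :=
      ⟨Or.inr (Or.inl ⟨q, m, hq, hb⟩), trivial⟩
    obtain ⟨a, b, c⟩ := good_insertAll P [q'] l _ hg hnd hgood (fun y hy => hy)
    exact ⟨_, a, b, c q' (by simp)⟩
  | @rcvc q m q' e w hsq hse hb hr ihq ihe =>
    obtain ⟨l₁, hg₁, hnd₁, hq₁⟩ := ihq
    obtain ⟨l₂, hg₂, hnd₂, he₂⟩ := ihe
    obtain ⟨a, b, c⟩ := good_insertAll P l₂ l₁ _ hg₁ hnd₁ hg₂ (fun y hy => hy.elim)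
    set l₃ := insertAll l₁ l₂ with hl₃
    have hq₃ : q ∈ l₃ := subset_insertAll l₂ l₁ q hq₁
    have he₃ : e ∈ l₃ := c e he₂
    have hgood : GoodFrom P (· ∈ l₃) [q'] :=
      ⟨Or.inr (Or.inr ⟨q, e, m, w, hq₃, he₃, hr, hb⟩), trivial⟩
    obtain ⟨a', b', c'⟩ := good_insertAll P [q'] l₃ _ a b hgood (fun y hy => hy)
    exact ⟨_, a', b', c' q' (by simp)⟩

end Work

section Build
variable {Q M : Type} [Fintype Q] [DecidableEq Q] [Fintype M] (P : BroadcastProtocol Q M)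

/-- Derivation data for position `i` in a good list. -/
inductive RData {s : ℕ} (P : BroadcastProtocol Q M) (qq : Fin s → Q) : Fin s → Type where
  | root (i : Fin s) (h : qq i ∈ P.I) : RData P qq i
  | brr (i : Fin s) (p : Fin s) (hp : p.val < i.val) (m : M)
      (hbr : P.br (qq p) m (qq i)) : RData P qq i
  | rcvv (i : Fin s) (p e : Fin s) (hp : p.val < i.val) (he : e.val < i.val) (m : M) (w : Q)
      (hr : P.rcv (qq p) m (qq i)) (hb : P.br (qq e) m w) : RData P qq i

lemma goodFrom_get : ∀ (l : List Q) (pre : Q → Prop), GoodFrom P pre l →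
    ∀ i : Fin l.length,
      GoodAt P (fun y => pre y ∨ ∃ j : Fin l.length, j.val < i.val ∧ l.get j = y) (l.get i) := by
  intro l
  induction l with
  | nil => intro pre _ i; exact absurd i.isLt (by simp)
  | cons x rest ih =>
    intro pre hgf i
    obtain ⟨hx, hrest⟩ := hgf
    rcases i with ⟨iv, hi⟩
    cases iv with
    | zero =>
      exact hx.mono P (fun y hy => Or.inl hy)
    | succ k =>
      have hk : k < rest.length := by simpa using hi
      have := ih _ hrest ⟨k, hk⟩
      refine this.mono P ?_
      rintro y ((hy | rfl) | ⟨⟨j, hj'⟩, hj, rfl⟩)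
      · exact Or.inl hy
      · exact Or.inr ⟨⟨0, by simp⟩, by simp⟩
      · exact Or.inr ⟨⟨j + 1, by simpa using hj'⟩, by simpa using hj⟩

lemma rdata_nonempty {l : List Q} (hg : Good P l) (i : Fin l.length) :
    Nonempty (RData P l.get i) := by
  have := goodFrom_get P l _ hg i
  rcases this with h1 | ⟨p, m, (hF | ⟨j, hj, rfl⟩), hb⟩ | ⟨p, e, m, w, hp, he, hr, hb⟩
  · exact ⟨RData.root i h1⟩
  · exact hF.elim
  · exact ⟨RData.brr i j hj m hb⟩
  · rcases hp with hF | ⟨jp, hjp, rfl⟩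
    · exact hF.elim
    rcases he with hF | ⟨je, hje, rfl⟩
    · exact hF.elim
    exact ⟨RData.rcvv i jp je hjp hje m w hr hb⟩

end Build
section Build2
variable {Q M : Type} [Fintype Q] [DecidableEq Q] [Fintype M] {P : BroadcastProtocol Q M}
variable {s : ℕ} {qq : Fin s → Q} (rd : ∀ i : Fin s, RData P qq i)

/-- Position of a token targeted at `i` after the first `j` stages. -/
noncomputable def walk (i : Fin s) (j : ℕ) : Q :=
  match rd i with
  | .root _ _ => qq i
  | .brr _ p hp _ _ => if i.val < j then qq i else walk p j
  | .rcvv _ p _ hp _ _ _ _ _ => if i.val < j then qq i else walk p j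
termination_by i.val
decreasing_by all_goals exact hp

/-- `j` lies on the derivation chain of `i`. -/
def inChain (i j : Fin s) : Prop :=
  i = j ∨ match rd i with
  | .root _ _ => False
  | .brr _ p hp _ _ => inChain p j
  | .rcvv _ p _ hp _ _ _ _ _ => inChain p j
termination_by i.val
decreasing_by all_goals exact hp

end Build2

section Walk
variable {Q M : Type} [Fintype Q] [DecidableEq Q] [Fintype M] {P : BroadcastProtocol Q M}
variable {s : ℕ} {qq : Fin s → Q} (rd : ∀ i : Fin s, RData P qq i)

/-- The state from which stage `J` moves tokens to `qq J`. -/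
noncomputable def parQ (J : Fin s) : Q :=
  match rd J with
  | .root _ _ => qq J
  | .brr _ p _ _ _ => qq p
  | .rcvv _ p _ _ _ _ _ _ _ => qq p

lemma walk_lt {i : Fin s} {j : ℕ} (h : i.val < j) : walk rd i j = qq i := by
  rw [walk]
  split <;> simp [h]

lemma chain_le (i j : Fin s) (h : inChain rd i j) : j.val ≤ i.val := by
  rw [inChain] at h
  rcases h with rfl | h
  · exact le_refl _
  · rcases hrd : rd i with _ | ⟨p, hp, m, hb⟩ | ⟨p, e, hp, he, m, w, hr, hb⟩ <;>
      rw [hrd] at h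
    · exact h.elim
    · exact le_trans (chain_le p j h) (le_of_lt hp)
    · exact le_trans (chain_le p j h) (le_of_lt hp)
termination_by i.val
decreasing_by all_goals exact hp

lemma chain_self (i : Fin s) : inChain rd i i := by rw [inChain]; exact Or.inl rfl

lemma walk_succ_not {i J : Fin s} (h : ¬ inChain rd i J) :
    walk rd i (J.val + 1) = walk rd i J.val := by
  have hne : i ≠ J := fun he => h (he ▸ chain_self rd i)
  rw [walk, walk]
  rcases hrd : rd i with _ | ⟨p, hp, m, hb⟩ | ⟨p, e, hp, he', m, w, hr, hb⟩
  · rfl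
  all_goals {
    have hchain : ¬ inChain rd p J := by
      intro hc
      exact h (by rw [inChain, hrd]; exact Or.inr hc)
    rcases lt_trichotomy i.val J.val with hlt | heq | hgt
    · simp [hlt, Nat.lt_succ_of_lt hlt]
    · exact absurd (Fin.ext heq) hne
    · have h1 : ¬ i.val < J.val := by omega
      have h2 : ¬ i.val < J.val + 1 := by omega
      simp only [h1, h2, if_false]
      exact walk_succ_not hchain
  }
termination_by i.val
decreasing_by all_goals exact hp

lemma walk_chain_before {i J : Fin s} (h : inChain rd i J) :
    walk rd i J.val = parQ rd J := by
  rw [inChain] at h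
  by_cases hij : i = J
  · subst hij
    rw [walk, parQ]
    rcases hrd : rd i with ⟨hI⟩ | ⟨p, hp, m, hb⟩ | ⟨p, e, hp, he', m, w, hr, hb⟩
    · rfl
    · show (if (i : ℕ) < (i : ℕ) then qq i else walk rd p i) = qq p
      rw [if_neg (lt_irrefl _)]
      exact walk_lt rd hp
    · show (if (i : ℕ) < (i : ℕ) then qq i else walk rd p i) = qq p
      rw [if_neg (lt_irrefl _)]
      exact walk_lt rd hp
  · rcases h with rfl | h
    · exact absurd rfl hij
    rw [walk]
    rcases hrd : rd i with ⟨hI⟩ | ⟨p, hp, m, hb⟩ | ⟨p, e, hp, he', m, w, hr, hb⟩ <;>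
      rw [hrd] at h
    · exact False.elim h
    · have h' : inChain rd p J := h
      show (if (i : ℕ) < (J : ℕ) then qq i else walk rd p J) = parQ rd J
      have h1 : ¬ (i : ℕ) < (J : ℕ) := by have := chain_le rd p J h'; have := hp; omega
      rw [if_neg h1]
      exact walk_chain_before h'
    · have h' : inChain rd p J := h
      show (if (i : ℕ) < (J : ℕ) then qq i else walk rd p J) = parQ rd J
      have h1 : ¬ (i : ℕ) < (J : ℕ) := by have := chain_le rd p J h'; have := hp; omega
      rw [if_neg h1]
      exact walk_chain_before h'
termination_by i.val
decreasing_by all_goals exact hp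

lemma walk_chain_after {i J : Fin s} (h : inChain rd i J) :
    walk rd i (J.val + 1) = qq J := by
  rw [inChain] at h
  by_cases hij : i = J
  · subst hij
    rw [walk]
    rcases hrd : rd i with ⟨hI⟩ | ⟨p, hp, m, hb⟩ | ⟨p, e, hp, he', m, w, hr, hb⟩
    · rfl
    · show (if (i : ℕ) < (i : ℕ) + 1 then qq i else walk rd p ((i : ℕ) + 1)) = qq i
      rw [if_pos (Nat.lt_succ_self _)]
    · show (if (i : ℕ) < (i : ℕ) + 1 then qq i else walk rd p ((i : ℕ) + 1)) = qq i
      rw [if_pos (Nat.lt_succ_self _)]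
  · rcases h with rfl | h
    · exact absurd rfl hij
    rw [walk]
    rcases hrd : rd i with ⟨hI⟩ | ⟨p, hp, m, hb⟩ | ⟨p, e, hp, he', m, w, hr, hb⟩ <;>
      rw [hrd] at h
    · exact False.elim h
    · have h' : inChain rd p J := h
      show (if (i : ℕ) < (J : ℕ) + 1 then qq i else walk rd p ((J : ℕ) + 1)) = qq J
      have h1 : ¬ (i : ℕ) < (J : ℕ) + 1 := by have := chain_le rd p J h'; have := hp; omega
      rw [if_neg h1]
      exact walk_chain_after h'
    · have h' : inChain rd p J := h
      show (if (i : ℕ) < (J : ℕ) + 1 then qq i else walk rd p ((J : ℕ) + 1)) = qq J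
      have h1 : ¬ (i : ℕ) < (J : ℕ) + 1 := by have := chain_le rd p J h'; have := hp; omega
      rw [if_neg h1]
      exact walk_chain_after h'
termination_by i.val
decreasing_by all_goals exact hp

lemma walk_zero_init (i : Fin s) : walk rd i 0 ∈ P.I := by
  rw [walk]
  rcases hrd : rd i with ⟨hI⟩ | ⟨p, hp, m, hb⟩ | ⟨p, e, hp, he', m, w, hr, hb⟩
  · exact hI
  · show (if (i : ℕ) < 0 then qq i else walk rd p 0) ∈ P.I
    rw [if_neg (Nat.not_lt_zero _)]
    exact walk_zero_init p
  · show (if (i : ℕ) < 0 then qq i else walk rd p 0) ∈ P.I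
    rw [if_neg (Nat.not_lt_zero _)]
    exact walk_zero_init p
termination_by i.val
decreasing_by all_goals exact hp

end Walk

section Tokens
variable {Q M : Type} [Fintype Q] [DecidableEq Q] [Fintype M] {P : BroadcastProtocol Q M}
variable {s : ℕ} {qq : Fin s → Q} (rd : ∀ i : Fin s, RData P qq i)

/-- Is `i` derived by a reception rule? -/
def isRcv (i : Fin s) : Prop :=
  match rd i with
  | .rcvv _ _ _ _ _ _ _ _ _ => True
  | _ => False

/-- The target of a token. -/
noncomputable def tgt (θ : Fin s × Bool) : Fin s :=
  if θ.2 then θ.1 else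
    match rd θ.1 with
    | .root _ _ => θ.1
    | .brr _ _ _ _ _ => θ.1
    | .rcvv _ _ e _ _ _ _ _ _ => e

/-- A token `(i, false)` with `i` a reception stage gets consumed at stage `i`;
`land` is where it lands. -/
noncomputable def land (θ : Fin s × Bool) : Q :=
  match rd θ.1 with
  | .rcvv _ _ _ _ _ _ w _ _ => w
  | _ => qq θ.1

/-- Is the token consumed (eventually)? -/
def isCons (θ : Fin s × Bool) : Prop := θ.2 = false ∧ isRcv rd θ.1

/-- Intended position of token `θ` after the first `j` stages. -/
noncomputable def pos (j : ℕ) (θ : Fin s × Bool) : Q :=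
  @ite _ (isCons rd θ ∧ θ.1.val < j) (Classical.propDecidable _)
    (land rd θ) (walk rd (tgt rd θ) j)

lemma isRcv_of {i : Fin s} {p e : Fin s} {hp he m w hr hb}
    (hJ : rd i = RData.rcvv i p e hp he m w hr hb) : isRcv rd i := by
  unfold isRcv; rw [hJ]; exact trivial

lemma not_isRcv_root {i : Fin s} {h} (hJ : rd i = RData.root i h) : ¬ isRcv rd i := by
  intro hc; unfold isRcv at hc; rw [hJ] at hc; exact hc

lemma not_isRcv_brr {i : Fin s} {p hp m hbr} (hJ : rd i = RData.brr i p hp m hbr) :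
    ¬ isRcv rd i := by
  intro hc; unfold isRcv at hc; rw [hJ] at hc; exact hc

lemma tgt_true (i : Fin s) : tgt rd (i, true) = i := by simp [tgt]

lemma tgt_false_rcv {i : Fin s} {p e : Fin s} {hp he m w hr hb}
    (hJ : rd i = RData.rcvv i p e hp he m w hr hb) : tgt rd (i, false) = e := by
  simp [tgt, hJ]

lemma land_rcv {i : Fin s} {p e : Fin s} {hp he m w hr hb}
    (hJ : rd i = RData.rcvv i p e hp he m w hr hb) (b : Bool) : land rd (i, b) = w := by
  simp [land, hJ]

lemma pos_of_cons {θ : Fin s × Bool} {j : ℕ} (h1 : isCons rd θ) (h2 : θ.1.val < j) :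
    pos rd j θ = land rd θ := by
  unfold pos; rw [if_pos ⟨h1, h2⟩]

lemma pos_of_not {θ : Fin s × Bool} {j : ℕ} (h : ¬ (isCons rd θ ∧ θ.1.val < j)) :
    pos rd j θ = walk rd (tgt rd θ) j := by
  unfold pos; rw [if_neg h]

/-- The tokens that move at stage `J`. -/
def Mov (J : Fin s) (θ : Fin s × Bool) : Prop :=
  ¬ (isCons rd θ ∧ θ.1.val < J.val) ∧ inChain rd (tgt rd θ) J

lemma pos_succ_of_not_chain (J : Fin s) (θ : Fin s × Bool)
    (h1 : ¬ (isCons rd θ ∧ θ.1 = J))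
    (h2 : ¬ (isCons rd θ ∧ θ.1.val < J.val) → ¬ inChain rd (tgt rd θ) J) :
    pos rd (J.val + 1) θ = pos rd J.val θ := by
  by_cases hc : isCons rd θ ∧ θ.1.val < J.val
  · rw [pos_of_cons rd hc.1 hc.2, pos_of_cons rd hc.1 (Nat.lt_succ_of_lt hc.2)]
  · have hnc2 : ¬ (isCons rd θ ∧ θ.1.val < J.val + 1) := by
      rintro ⟨hic, hlt⟩
      rcases Nat.lt_succ_iff_lt_or_eq.mp hlt with h | h
      · exact hc ⟨hic, h⟩
      · exact h1 ⟨hic, Fin.ext h⟩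
    rw [pos_of_not rd hnc2, pos_of_not rd hc, walk_succ_not rd (h2 hc)]

end Tokens

section ExecBuild
variable {Q M : Type} [Fintype Q] [DecidableEq Q] [Fintype M] {P : BroadcastProtocol Q M}
variable {ν : Type} [Fintype ν] [DecidableEq ν]

lemma exists_nil (L0 : ν → Q) (h : ∀ v, L0 v ∈ P.I) :
    ∃ ρ : RExec P ν 0, ρ.lastLab = L0 :=
  ⟨{ lab := fun _ => L0
     edges := fun _ _ _ => False
     edges_symm := fun _ _ _ h => h.elim
     edges_irrefl := fun _ _ h => h
     sender := Fin.elim0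
     msg := Fin.elim0
     init := h
     step_br := fun i => i.elim0
     step_rcv := fun i => i.elim0 }, rfl⟩

lemma exists_snoc {r : ℕ} (ρ : RExec P ν r) (snd : ν) (m : M) (Rcv : ν → Prop) (L' : ν → Q)
    (h0 : ¬ Rcv snd)
    (h1 : P.br (ρ.lastLab snd) m (L' snd))
    (h2 : ∀ v, v ≠ snd → Rcv v → P.rcv (ρ.lastLab v) m (L' v))
    (h3 : ∀ v, v ≠ snd → ¬ Rcv v → L' v = ρ.lastLab v) :
    ∃ ρ' : RExec P ν (r + 1), ρ'.lastLab = L' := by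
  set Elast : ν → ν → Prop := fun v w => (v = snd ∧ Rcv w ∧ w ≠ snd) ∨ (w = snd ∧ Rcv v ∧ v ≠ snd)
    with hElast
  refine ⟨{
    lab := Fin.snoc ρ.lab L'
    edges := Fin.snoc (Fin.snoc (Fin.init ρ.edges) Elast) Elast
    edges_symm := ?_
    edges_irrefl := ?_
    sender := Fin.snoc ρ.sender snd
    msg := Fin.snoc ρ.msg m
    init := ?_
    step_br := ?_
    step_rcv := ?_ }, ?_⟩
  · -- edges_symm
    intro i
    induction i using Fin.lastCases with
    | last => simp only [Fin.snoc_last]; intro x y h; rcases h with ⟨a, b⟩ | ⟨a, b⟩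
              · exact Or.inr ⟨a, b⟩
              · exact Or.inl ⟨a, b⟩
    | cast i =>
      induction i using Fin.lastCases with
      | last => simp only [Fin.snoc_castSucc, Fin.snoc_last]
                intro x y h; rcases h with ⟨a, b⟩ | ⟨a, b⟩
                · exact Or.inr ⟨a, b⟩
                · exact Or.inl ⟨a, b⟩
      | cast i => simp only [Fin.snoc_castSucc, Fin.init]
                  exact ρ.edges_symm _
  · -- edges_irrefl
    intro i
    induction i using Fin.lastCases with
    | last => simp only [Fin.snoc_last]
              rintro x (⟨a, b, c⟩ | ⟨a, b, c⟩) <;> exact c a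
    | cast i =>
      induction i using Fin.lastCases with
      | last => simp only [Fin.snoc_castSucc, Fin.snoc_last]
                rintro x (⟨a, b, c⟩ | ⟨a, b, c⟩) <;> exact c a
      | cast i => simp only [Fin.snoc_castSucc, Fin.init]
                  exact ρ.edges_irrefl _
  · -- init
    intro v
    have h0' : (0 : Fin (r + 1 + 1)) = Fin.castSucc 0 := rfl
    rw [h0', Fin.snoc_castSucc]
    exact ρ.init v
  · -- step_br
    intro i
    induction i using Fin.lastCases with
    | last =>
      simp only [Fin.succ_last, Fin.snoc_last, Fin.snoc_castSucc]
      exact h1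
    | cast i =>
      simp only [Fin.succ_castSucc, Fin.snoc_castSucc]
      exact ρ.step_br i
  · -- step_rcv
    intro i
    induction i using Fin.lastCases with
    | last =>
      intro v hv
      rw [Fin.snoc_last] at hv
      simp only [Fin.succ_last, Fin.snoc_last, Fin.snoc_castSucc]
      constructor
      · rintro (⟨_, hR, _⟩ | ⟨hvs, _, _⟩)
        · exact h2 v hv hR
        · exact absurd hvs hv
      · intro hne
        have hnR : ¬ Rcv v := fun hR => hne (Or.inl ⟨rfl, hR, hv⟩)
        exact h3 v hv hnR
    | cast i =>
      intro v hv
      rw [Fin.snoc_castSucc] at hv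
      simp only [Fin.succ_castSucc, Fin.snoc_castSucc, Fin.init]
      exact ρ.step_rcv i v hv
  · -- lastLab
    simp only [RExec.lastLab, Fin.snoc_last]

lemma exists_solo_list {r : ℕ} (ρ : RExec P ν r) (a b : Q) (m : M)
    (ts : List ν) (hnd : ts.Nodup) (hall : ∀ θ ∈ ts, ρ.lastLab θ = a) (hbr : P.br a m b) :
    ∃ (r' : ℕ) (ρ' : RExec P ν r'), r' = r + ts.length ∧
      ρ'.lastLab = fun v => if v ∈ ts then b else ρ.lastLab v := by
  induction ts generalizing r ρ with
  | nil => exact ⟨r, ρ, by simp, by funext v; simp⟩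
  | cons t ts' ih =>
    obtain ⟨ρ₁, hρ₁⟩ := exists_snoc ρ t m (fun _ => False) (Function.update ρ.lastLab t b)
      (fun h => h)
      (by rw [Function.update_self]; exact (hall t (by simp)) ▸ hbr)
      (fun v _ h => h.elim)
      (fun v hv _ => Function.update_of_ne hv _ _)
    have hall' : ∀ θ ∈ ts', ρ₁.lastLab θ = a := by
      intro θ hθ
      have hne : θ ≠ t := fun he => (List.nodup_cons.mp hnd).1 (he ▸ hθ)
      rw [hρ₁, Function.update_of_ne hne]
      exact hall θ (by simp [hθ])
    obtain ⟨r', ρ', hr', hlast⟩ := ih ρ₁ (List.nodup_cons.mp hnd).2 hall'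
    refine ⟨r', ρ', by simp [hr']; omega, ?_⟩
    rw [hlast]
    funext v
    by_cases hv : v ∈ ts'
    · simp [hv]
    · by_cases hvt : v = t
      · subst hvt
        simp [hv, hρ₁]
      · simp [hv, hvt, hρ₁, Function.update_of_ne hvt]

end ExecBuild

section MainBuild
variable {Q M : Type} [Fintype Q] [DecidableEq Q] [Fintype M] {P : BroadcastProtocol Q M}
variable {s : ℕ} {qq : Fin s → Q} (rd : ∀ i : Fin s, RData P qq i)

lemma build (hs : 0 < s) : ∀ j : ℕ, j ≤ s →
    ∃ (r : ℕ) (ρ : RExec P (Fin s × Bool) r), r ≤ 2 * s * j ∧ ρ.lastLab = pos rd j := by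
  classical
  intro j
  induction j with
  | zero =>
    intro _
    obtain ⟨ρ, hρ⟩ := exists_nil (P := P) (pos rd 0) (fun θ => by
      rw [pos_of_not rd (by simp)]
      exact walk_zero_init rd _)
    exact ⟨0, ρ, le_refl _, hρ⟩
  | succ j ih =>
    intro hj1
    obtain ⟨r, ρ, hr, hlast⟩ := ih (le_of_lt hj1)
    have hjs : j < s := hj1
    set J : Fin s := ⟨j, hjs⟩ with hJdef
    have hJv : J.val = j := rfl
    -- no token is newly consumed at a stage unless it is (J, false) with rd J a reception
    rcases hJ : rd J with ⟨hI⟩ | ⟨p, hp, m, hbm⟩ | ⟨p, e, hp, he, m, w, hr', hbm⟩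
    · -- root stage: nothing happens
      refine ⟨r, ρ, le_trans hr (by nlinarith), ?_⟩
      rw [hlast]
      funext θ
      show pos rd j θ = pos rd (j + 1) θ
      rw [← hJv]
      by_cases hch : inChain rd (tgt rd θ) J
      · by_cases hc : isCons rd θ ∧ θ.1.val < J.val
        · rw [pos_of_cons rd hc.1 hc.2, pos_of_cons rd hc.1 (Nat.lt_succ_of_lt hc.2)]
        · have hnc2 : ¬ (isCons rd θ ∧ θ.1.val < J.val + 1) := by
            rintro ⟨hic, hlt⟩
            rcases Nat.lt_succ_iff_lt_or_eq.mp hlt with hlt' | heq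
            · exact hc ⟨hic, hlt'⟩
            · exact not_isRcv_root rd hJ (Fin.ext heq ▸ hic.2)
          rw [pos_of_not rd hc, pos_of_not rd hnc2, walk_chain_after rd hch,
            walk_chain_before rd hch, parQ, hJ]
      · exact (pos_succ_of_not_chain rd J θ
          (fun hx => not_isRcv_root rd hJ (hx.2 ▸ hx.1.2)) (fun _ => hch)).symm
    · -- broadcast stage
      set ts : List (Fin s × Bool) := (Finset.univ.filter (Mov rd J)).toList with hts
      have hmem : ∀ θ, θ ∈ ts ↔ Mov rd J θ := by
        intro θ; rw [hts, Finset.mem_toList, Finset.mem_filter]; simp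
      have hall : ∀ θ ∈ ts, ρ.lastLab θ = qq p := by
        intro θ hθ
        rw [hlast]
        obtain ⟨hnc, hch⟩ := (hmem θ).mp hθ
        rw [← hJv, pos_of_not rd hnc, walk_chain_before rd hch, parQ, hJ]
      obtain ⟨r', ρ', hr'', hlast'⟩ :=
        exists_solo_list ρ (qq p) (qq J) m ts (Finset.nodup_toList _) hall hbm
      refine ⟨r', ρ', ?_, ?_⟩
      · have hlen : ts.length ≤ 2 * s := by
          rw [hts, Finset.length_toList]
          calc (Finset.univ.filter (Mov rd J)).card ≤ Fintype.card (Fin s × Bool) :=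
                Finset.card_le_univ _
            _ = 2 * s := by simp [Fintype.card_prod]; ring
        have hring : 2 * s * (j + 1) = 2 * s * j + 2 * s := by ring
        omega
      · rw [hlast']
        funext θ
        by_cases hθ : θ ∈ ts
        · simp only [hθ, if_true]
          obtain ⟨hnc, hch⟩ := (hmem θ).mp hθ
          have hnc2 : ¬ (isCons rd θ ∧ θ.1.val < j + 1) := by
            rintro ⟨hic, hlt⟩
            rcases Nat.lt_succ_iff_lt_or_eq.mp hlt with hlt' | heq
            · exact hnc ⟨hic, hlt'⟩
            · exact not_isRcv_brr rd hJ (Fin.ext (heq.trans hJv.symm) ▸ hic.2)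
          rw [pos_of_not rd hnc2]
          rw [show j + 1 = J.val + 1 from rfl, walk_chain_after rd hch]
        · simp only [hθ, if_false]
          rw [hlast]
          show pos rd j θ = pos rd (j + 1) θ
          rw [← hJv]
          refine (pos_succ_of_not_chain rd J θ
            (fun hx => not_isRcv_brr rd hJ (hx.2 ▸ hx.1.2)) (fun hnc => ?_)).symm
          intro hch
          exact hθ ((hmem θ).mpr ⟨hnc, hch⟩)
    · -- reception stage
      set θ₀ : Fin s × Bool := (J, false) with hθ₀
      have htgt0 : tgt rd θ₀ = e := tgt_false_rcv rd hJ
      have hcons0 : isCons rd θ₀ := ⟨rfl, isRcv_of rd hJ⟩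
      have hnMov0 : ¬ Mov rd J θ₀ := by
        rintro ⟨-, hch⟩
        rw [htgt0] at hch
        have := chain_le rd e J hch
        omega
      have hMov_ne : ∀ θ, Mov rd J θ → θ ≠ θ₀ := fun θ hM hEq => hnMov0 (hEq ▸ hM)
      obtain ⟨ρ', hlast'⟩ := exists_snoc ρ θ₀ m (Mov rd J) (pos rd (j + 1))
        hnMov0
        (by
          rw [hlast]
          have h1 : pos rd j θ₀ = qq e := by
            rw [pos_of_not rd (by rintro ⟨-, hlt⟩; exact absurd hlt (lt_irrefl _)), htgt0]
            exact walk_lt rd he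
          have h2 : pos rd (j + 1) θ₀ = w := by
            rw [pos_of_cons rd hcons0 (Nat.lt_succ_self _)]
            exact land_rcv rd hJ false
          rw [h1, h2]
          exact hbm)
        (by
          intro v hv hM
          rw [hlast]
          obtain ⟨hnc, hch⟩ := hM
          have h1 : pos rd j v = qq p := by
            rw [← hJv, pos_of_not rd hnc, walk_chain_before rd hch, parQ, hJ]
          have hnc2 : ¬ (isCons rd v ∧ v.1.val < j + 1) := by
            rintro ⟨hic, hlt⟩
            rcases Nat.lt_succ_iff_lt_or_eq.mp hlt with hlt' | heq
            · exact hnc ⟨hic, hlt'⟩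
            · exact hv (Prod.ext (Fin.ext (heq.trans hJv.symm)) hic.1)
          have h2 : pos rd (j + 1) v = qq J := by
            rw [pos_of_not rd hnc2]
            rw [show j + 1 = J.val + 1 from rfl, walk_chain_after rd hch]
          rw [h1, h2]
          exact hr')
        (by
          intro v hv hnM
          rw [hlast]
          show pos rd (j + 1) v = pos rd j v
          rw [← hJv]
          refine pos_succ_of_not_chain rd J v
            (fun hx => hv (Prod.ext hx.2 hx.1.1)) (fun hnc hch => hnM ⟨hnc, hch⟩))
      refine ⟨r + 1, ρ', ?_, hlast'⟩
      have hring : 2 * s * (j + 1) = 2 * s * j + 2 * s := by ring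
      omega

end MainBuild

section Final
variable {Q M : Type} [Fintype Q] [DecidableEq Q] [Fintype M] {P : BroadcastProtocol Q M}

lemma relabel {ν ν' : Type} [Fintype ν] [DecidableEq ν] [Fintype ν'] [DecidableEq ν'] {r : ℕ}
    (ρ : RExec P ν r) (e : ν ≃ ν') :
    ∃ ρ' : RExec P ν' r, ∀ w, ρ'.lastLab w = ρ.lastLab (e.symm w) := by
  refine ⟨{
    lab := fun i w => ρ.lab i (e.symm w)
    edges := fun i w x => ρ.edges i (e.symm w) (e.symm x)
    edges_symm := fun i w x h => ρ.edges_symm i h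
    edges_irrefl := fun i w h => ρ.edges_irrefl i _ h
    sender := fun i => e (ρ.sender i)
    msg := ρ.msg
    init := fun w => ρ.init _
    step_br := fun i => by simpa using ρ.step_br i
    step_rcv := fun i w hw => by
      have hw' : e.symm w ≠ ρ.sender i := by
        intro hc
        have : w = e (ρ.sender i) := by rw [← hc, Equiv.apply_symm_apply]
        exact hw this
      simpa using ρ.step_rcv i (e.symm w) hw' }, fun w => rfl⟩

end Final


/-- **Upper bounds on cutoff and covering length for reconfigurable networks.**
If some reconfigurable execution of `P` covers `F`, then there is a reconfigurable
execution covering `F` with at most `2|Q|` nodes and length at most `2|Q|²`. -/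
theorem upper_bounds_reconfigurable
    {Q M : Type} [Fintype Q] [DecidableEq Q] [Fintype M] (P : BroadcastProtocol Q M)
    (F : Set Q) (ν : Type) [Fintype ν] [DecidableEq ν]
    (r₀ : ℕ) (ρ₀ : RExec P ν r₀) (h : ρ₀.Covers F) :
    ∃ (k r : ℕ) (ρ : RExec P (Fin k) r), ρ.Covers F ∧
      k ≤ 2 * Fintype.card Q ∧ r ≤ 2 * Fintype.card Q ^ 2 := by
  classical
  obtain ⟨v, hv⟩ := h
  have hsat : Sat_s3 P (ρ₀.lastLab v) := sat_lab P ρ₀ (Fin.last r₀) v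
  obtain ⟨l, hg, hnd, hmem⟩ := sat_good P hsat
  obtain ⟨t, ht⟩ := List.mem_iff_get.mp hmem
  have hs : 0 < l.length := lt_of_le_of_lt (Nat.zero_le _) t.isLt
  let rd : ∀ i : Fin l.length, RData P l.get i := fun i => Classical.choice (rdata_nonempty P hg i)
  obtain ⟨r, ρ, hrle, hlast⟩ := build rd hs l.length (le_refl _)
  have hend : ρ.lastLab (t, true) = ρ₀.lastLab v := by
    rw [hlast, pos_of_not rd (by rintro ⟨⟨hb, -⟩, -⟩; exact Bool.noConfusion hb)]
    rw [tgt_true rd t, walk_lt rd t.isLt]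
    exact ht
  have hcardeq : Fintype.card (Fin l.length × Bool) = 2 * l.length := by
    simp [Fintype.card_prod]; ring
  let eqv : (Fin l.length × Bool) ≃ Fin (2 * l.length) := Fintype.equivFinOfCardEq hcardeq
  obtain ⟨ρ', hρ'⟩ := relabel ρ eqv
  have hlen : l.length ≤ Fintype.card Q := List.Nodup.length_le_card hnd
  refine ⟨2 * l.length, r, ρ', ⟨eqv (t, true), ?_⟩, by omega, ?_⟩
  · rw [hρ' _, Equiv.symm_apply_apply, hend]
    exact hv
  · calc r ≤ 2 * l.length * l.length := hrle
      _ ≤ 2 * Fintype.card Q ^ 2 := by nlinarith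
end

section
/- Refined upper bounds for reconfigurable networks: let B = (Q, I, Σ, Δ) be a broadcast protocol and F ⊆ Q. If there exists a reconfigurable execution of B covering F, then there exists a reconfigurable execution ρ covering F with size |ρ| ≤ 2|Q| − |I| and with a_ρ(n) ≤ |Q| − |I| for every node n; consequently its length satisfies ‖ρ‖ ≤ (2|Q| − |I|)·(|Q| − |I|). -/
section Aux

variable {Q M : Type} [Fintype Q] [DecidableEq Q] [Fintype M]

/-- One step of the coverability saturation. -/
def covStep (P : BroadcastProtocol Q M) (C : Q → Prop) (q : Q) : Prop :=
  C q ∨ (∃ p m, C p ∧ P.br p m q) ∨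
    (∃ p m p' z, C p ∧ P.rcv p m q ∧ C p' ∧ P.br p' m z)

/-- Bounded-depth coverable states. -/
def CovN (P : BroadcastProtocol Q M) : ℕ → Q → Prop
  | 0, q => q ∈ P.I
  | (n+1), q => covStep P (CovN P n) q

lemma covStep_mono {P : BroadcastProtocol Q M} {C C' : Q → Prop}
    (h : ∀ q, C q → C' q) {q : Q} (hq : covStep P C q) : covStep P C' q := by
  rcases hq with h1 | ⟨p, m, hp, hbr⟩ | ⟨p, m, p', z, hp, hr, hp', hbr⟩
  · exact Or.inl (h _ h1)
  · exact Or.inr (Or.inl ⟨p, m, h _ hp, hbr⟩)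
  · exact Or.inr (Or.inr ⟨p, m, p', z, h _ hp, hr, h _ hp', hbr⟩)

lemma covN_succ_of {P : BroadcastProtocol Q M} {n : ℕ} {q : Q}
    (h : CovN P n q) : CovN P (n+1) q := Or.inl h

lemma covN_mono {P : BroadcastProtocol Q M} {m n : ℕ} (hmn : m ≤ n) {q : Q}
    (h : CovN P m q) : CovN P n q := by
  induction n with
  | zero => simpa [Nat.le_zero.mp hmn] using h
  | succ n ih =>
    rcases Nat.lt_or_ge m (n+1) with hlt | hge
    · exact covN_succ_of (ih (Nat.lt_succ_iff.mp hlt))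
    · have : m = n + 1 := le_antisymm hmn hge
      subst this; exact h

/-- If the saturation is stable at level `n`, it stays there. -/
lemma covN_stable {P : BroadcastProtocol Q M} {n : ℕ}
    (h : ∀ q, CovN P (n+1) q → CovN P n q) :
    ∀ k q, CovN P k q → CovN P n q := by
  intro k
  induction k with
  | zero => intro q hq; exact covN_mono (Nat.zero_le _) hq
  | succ k ih =>
    rcases Nat.lt_or_ge k n with hlt | hge
    · intro q hq; exact covN_mono hlt hq
    · intro q hq
      apply h
      have : covStep P (CovN P k) q := hq
      exact covStep_mono ih this |> fun hs => covN_mono (Nat.succ_le_succ (le_refl n)) hs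
open Classical in
/-- The finset of states coverable at level `n`. -/
noncomputable def covSet (P : BroadcastProtocol Q M) (n : ℕ) : Finset Q :=
  Finset.univ.filter (fun q => CovN P n q)

lemma mem_covSet {P : BroadcastProtocol Q M} {n : ℕ} {q : Q} :
    q ∈ covSet P n ↔ CovN P n q := by
  classical
  simp [covSet]

lemma covSet_zero {P : BroadcastProtocol Q M} : covSet P 0 = P.I := by
  ext q; simp [mem_covSet, CovN]

lemma exists_stable (P : BroadcastProtocol Q M) :
    ∃ n ≤ Fintype.card Q - P.I.card, ∀ q, CovN P (n+1) q → CovN P n q := by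
  by_contra hcon
  push_neg at hcon
  have key : ∀ n, n ≤ Fintype.card Q - P.I.card + 1 →
      P.I.card + n ≤ (covSet P n).card := by
    intro n
    induction n with
    | zero => intro _; simp [covSet_zero]
    | succ n ih =>
      intro hn
      have hn' : n ≤ Fintype.card Q - P.I.card := Nat.lt_succ_iff.mp hn
      obtain ⟨q, hq1, hq2⟩ := hcon n hn'
      have hsub : covSet P n ⊂ covSet P (n+1) := by
        constructor
        · intro x hx
          exact mem_covSet.mpr (covN_succ_of (mem_covSet.mp hx))
        · intro hsub'
          exact hq2 (mem_covSet.mp (hsub' (mem_covSet.mpr hq1)))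
      have := Finset.card_lt_card hsub
      have h2 := ih (le_trans (Nat.le_succ _) hn)
      omega
  have hI : P.I.card ≤ Fintype.card Q := by
    simpa using Finset.card_le_card (Finset.subset_univ P.I)
  have h1 := key (Fintype.card Q - P.I.card + 1) le_rfl
  have h2 : (covSet P (Fintype.card Q - P.I.card + 1)).card ≤ Fintype.card Q := by
    simpa using Finset.card_le_card (Finset.subset_univ _)
  omega

/-- Every coverable state is coverable at level `|Q| - |I|`. -/
lemma covN_bound {P : BroadcastProtocol Q M} {k : ℕ} {q : Q}
    (h : CovN P k q) : CovN P (Fintype.card Q - P.I.card) q := by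
  obtain ⟨n, hn, hst⟩ := exists_stable P
  exact covN_mono hn (covN_stable hst k q h)
/-- Soundness: all labels occurring in an execution are coverable. -/
lemma exec_labels_cov {P : BroadcastProtocol Q M} {ν : Type} [Fintype ν] [DecidableEq ν]
    {r : ℕ} (ρ : RExec P ν r) :
    ∀ i : Fin (r+1), ∃ n, ∀ v, CovN P n (ρ.lab i v) := by
  intro i
  induction i using Fin.induction with
  | zero => exact ⟨0, fun v => ρ.init v⟩
  | succ i ih =>
    obtain ⟨n, hn⟩ := ih
    refine ⟨n+1, fun v => ?_⟩
    by_cases hv : v = ρ.sender i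
    · subst hv
      exact Or.inr (Or.inl ⟨ρ.lab i.castSucc (ρ.sender i), ρ.msg i, hn _, ρ.step_br i⟩)
    · obtain ⟨he, hne⟩ := ρ.step_rcv i v hv
      by_cases hedge : ρ.edges i.castSucc (ρ.sender i) v
      · exact Or.inr (Or.inr ⟨ρ.lab i.castSucc v, ρ.msg i, ρ.lab i.castSucc (ρ.sender i),
          ρ.lab i.succ (ρ.sender i), hn v, he hedge, hn _, ρ.step_br i⟩)
      · rw [hne hedge]; exact covN_succ_of (hn v)

variable (P : BroadcastProtocol Q M)

/-- Coverable states. -/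
def Covd (q : Q) : Prop := ∃ n, CovN P n q

/-- Minimal level at which a state is coverable. -/
noncomputable def minlev (q : Q) : ℕ := sInf {n | CovN P n q}

variable {P}

lemma covN_minlev {q : Q} (h : Covd P q) : CovN P (minlev P q) q := Nat.sInf_mem h

lemma minlev_le {q : Q} {n : ℕ} (h : CovN P n q) : minlev P q ≤ n := Nat.sInf_le h

lemma not_covN_lt_minlev {q : Q} {n : ℕ} (h : n < minlev P q) : ¬ CovN P n q :=
  Nat.notMem_of_lt_sInf h

lemma minlev_pos {q : Q} (hq : q ∉ P.I) (hc : Covd P q) : 0 < minlev P q := by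
  rcases Nat.eq_zero_or_pos (minlev P q) with h0 | h; swap
  · exact h
  · exfalso; apply hq
    have := covN_minlev hc
    rw [h0] at this
    exact this

lemma not_mem_I_of_minlev_pos {q : Q} (hc : Covd P q) (h : 0 < minlev P q) : q ∉ P.I := by
  intro hI
  have : minlev P q ≤ 0 := minlev_le (show CovN P 0 q from hI)
  omega

variable (P)

/-- Candidate rule data justifying the first coverability of `q`. -/
def ruleProp (q : Q) : (Q × M) ⊕ (Q × M × Q × Q) → Prop
  | .inl (p, m) => CovN P (minlev P q - 1) p ∧ P.br p m q
  | .inr (p, m, p', z) => CovN P (minlev P q - 1) p ∧ P.rcv p m q ∧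
      CovN P (minlev P q - 1) p' ∧ P.br p' m z

variable {P}

lemma rule_exists {q : Q} (hc : Covd P q) (h0 : 0 < minlev P q) :
    ∃ r, ruleProp P q r := by
  obtain ⟨n, hn⟩ : ∃ n, minlev P q = n + 1 := ⟨minlev P q - 1, by omega⟩
  have hcov : CovN P (n+1) q := by rw [← hn]; exact covN_minlev hc
  have hnot : ¬ CovN P n q := not_covN_lt_minlev (by omega)
  rcases hcov with h1 | ⟨p, m, hp, hbr⟩ | ⟨p, m, p', z, hp, hr, hp', hbr⟩
  · exact absurd h1 hnot
  · have h1 : minlev P q - 1 = n := by omega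
    exact ⟨.inl (p, m), show CovN P (minlev P q - 1) p ∧ P.br p m q from
      ⟨by rw [h1]; exact hp, hbr⟩⟩
  · have h1 : minlev P q - 1 = n := by omega
    exact ⟨.inr (p, m, p', z), show CovN P (minlev P q - 1) p ∧ P.rcv p m q ∧
        CovN P (minlev P q - 1) p' ∧ P.br p' m z from
      ⟨by rw [h1]; exact hp, hr, by rw [h1]; exact hp', hbr⟩⟩

open Classical in
/-- A chosen rule for each state (if any). -/
noncomputable def ruleOf (P : BroadcastProtocol Q M) (q : Q) :
    Option ((Q × M) ⊕ (Q × M × Q × Q)) :=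
  if h : ∃ r, ruleProp P q r then some h.choose else none

lemma ruleOf_spec {q : Q} {r} (h : ruleOf P q = some r) : ruleProp P q r := by
  unfold ruleOf at h
  split at h
  · next hex => cases h; exact hex.choose_spec
  · cases h

lemma ruleOf_isSome {q : Q} (hc : Covd P q) (h0 : 0 < minlev P q) :
    ∃ r, ruleOf P q = some r := by
  unfold ruleOf
  rw [dif_pos (rule_exists hc h0)]
  exact ⟨_, rfl⟩

/-- The premise (moving node's previous state) of the chosen rule. -/
noncomputable def prem (P : BroadcastProtocol Q M) (q : Q) : Q :=
  (ruleOf P q).elim q (fun r => match r with | .inl (p, _) => p | .inr (p, _, _, _) => p)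

/-- The broadcaster source of the chosen reception rule. -/
noncomputable def bsrc (P : BroadcastProtocol Q M) (q : Q) : Q :=
  (ruleOf P q).elim q (fun r => match r with | .inl _ => q | .inr (_, _, p', _) => p')

/-- The broadcaster target of the chosen reception rule. -/
noncomputable def zOf (P : BroadcastProtocol Q M) (q : Q) : Q :=
  (ruleOf P q).elim q (fun r => match r with | .inl _ => q | .inr (_, _, _, z) => z)

/-- The chosen rule is a reception rule. -/
def IsR (P : BroadcastProtocol Q M) (q : Q) : Prop :=
  ∃ p m p' z, ruleOf P q = some (.inr (p, m, p', z))

lemma prem_cov {q : Q} (hc : Covd P q) (h0 : 0 < minlev P q) :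
    CovN P (minlev P q - 1) (prem P q) := by
  obtain ⟨r, hr⟩ := ruleOf_isSome hc h0
  have hspec := ruleOf_spec hr
  unfold prem
  rw [hr]
  match r, hspec with
  | .inl (p, m), hs => exact hs.1
  | .inr (p, m, p', z), hs => exact hs.1

lemma bsrc_cov {q : Q} {p m p' z} (hr : ruleOf P q = some (.inr (p, m, p', z))) :
    CovN P (minlev P q - 1) (bsrc P q) := by
  have hspec := ruleOf_spec hr
  unfold bsrc; rw [hr]
  exact hspec.2.2.1

lemma zOf_cov {q : Q} (hc : Covd P q) (h0 : 0 < minlev P q) (hR : IsR P q) :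
    CovN P (minlev P q) (zOf P q) := by
  obtain ⟨p, m, p', z, hr⟩ := hR
  have hspec := ruleOf_spec hr
  unfold zOf; rw [hr]
  obtain ⟨n, hn⟩ : ∃ n, minlev P q = n + 1 := ⟨minlev P q - 1, by omega⟩
  rw [hn]
  have hp' : CovN P n p' := by
    have := hspec.2.2.1
    rw [hn] at this
    simpa using this
  exact Or.inr (Or.inl ⟨p', m, hp', hspec.2.2.2⟩)
section RunDef

variable (P : BroadcastProtocol Q M) {ν : Type} [Fintype ν] [DecidableEq ν]

/-- One abstract step of a reconfigurable execution on labellings. -/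
def OneStep (L : ν → Q) (s : ν) (m : M) (L' : ν → Q) : Prop :=
  P.br (L s) m (L' s) ∧ ∀ v, v ≠ s → (L' v = L v ∨ P.rcv (L v) m (L' v))

/-- Abstract runs together with per-node broadcast counts. -/
inductive Run : (ν → Q) → (ν → Q) → (ν → ℕ) → Prop
  | refl (L : ν → Q) : Run L L 0
  | tail {L₁ L₂ : ν → Q} {c : ν → ℕ} {s : ν} {m : M} {L₃ : ν → Q} :
      Run L₁ L₂ c → OneStep P L₂ s m L₃ →
      Run L₁ L₃ (c + fun v => if v = s then 1 else 0)

variable {P}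

lemma Run.cast {L₁ L₂ L₂' : ν → Q} {c c' : ν → ℕ} (h : Run P L₁ L₂ c)
    (hL : L₂ = L₂') (hc : c = c') : Run P L₁ L₂' c' := by
  subst hL; subst hc; exact h

lemma Run.comp {L₁ L₂ L₃ : ν → Q} {c c' : ν → ℕ}
    (h1 : Run P L₁ L₂ c) (h2 : Run P L₂ L₃ c') : Run P L₁ L₃ (c + c') := by
  induction h2 with
  | refl => simpa using h1
  | tail h step ih =>
    exact (Run.tail ih step).cast rfl (by ext v; simp [add_assoc])

lemma Run.single {L L' : ν → Q} {s : ν} {m : M} (h : OneStep P L s m L') :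
    Run P L L' (fun v => if v = s then 1 else 0) :=
  (Run.tail (Run.refl L) h).cast rfl (by ext v; simp)

/-- Convert an abstract run into a concrete `RExec`. -/
lemma run_to_exec {L0 Lf : ν → Q} {c : ν → ℕ} (hrun : Run P L0 Lf c)
    (hinit : ∀ v, L0 v ∈ P.I) :
    ∃ (r : ℕ) (ρ : RExec P ν r), ρ.lastLab = Lf ∧ (∀ v, ρ.activeLen v = c v) := by
  induction hrun with
  | refl =>
    refine ⟨0, ⟨fun _ => L0, fun _ _ _ => False, by intro i x y h; exact h,
      by intro i x h; exact h, Fin.elim0, Fin.elim0, hinit, fun i => i.elim0,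
      fun i => i.elim0⟩, rfl, ?_⟩
    intro v
    simp [RExec.activeLen]
  | @tail L₂ c s m L₃ h step ih =>
    obtain ⟨r, ρ, hlast, hact⟩ := ih
    -- new edge relation for the appended step
    set Rb : ν → Prop := fun v => v ≠ s ∧ L₃ v ≠ L₂ v with hRb
    set Enew : ν → ν → Prop := fun a b => (a = s ∧ Rb b) ∨ (b = s ∧ Rb a) with hEnew
    refine ⟨r+1, ⟨Fin.snoc ρ.lab L₃,
      Fin.snoc (Function.update ρ.edges (Fin.last r) Enew) (fun _ _ => False),
      ?_, ?_, Fin.snoc ρ.sender s, Fin.snoc ρ.msg m, ?_, ?_, ?_⟩, ?_, ?_⟩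
    · -- symm
      intro i
      refine Fin.lastCases ?_ ?_ i
      · simp only [Fin.snoc_last]; intro x y h; exact h
      · intro j
        simp only [Fin.snoc_castSucc]
        by_cases hj : j = Fin.last r
        · subst hj
          simp only [Function.update_self]
          intro x y hxy
          rcases hxy with ⟨h1, h2⟩ | ⟨h1, h2⟩
          · exact Or.inr ⟨h1, h2⟩
          · exact Or.inl ⟨h1, h2⟩
        · rw [Function.update_of_ne hj]
          exact ρ.edges_symm j
    · -- irrefl
      intro i
      refine Fin.lastCases ?_ ?_ i
      · simp only [Fin.snoc_last]; intro x h; exact h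
      · intro j
        simp only [Fin.snoc_castSucc]
        by_cases hj : j = Fin.last r
        · subst hj
          simp only [Function.update_self]
          intro x hx
          rcases hx with ⟨h1, h2⟩ | ⟨h1, h2⟩ <;> exact h2.1 h1
        · rw [Function.update_of_ne hj]
          exact ρ.edges_irrefl j
    · -- init
      intro v
      have : ((0 : Fin (r+2))) = Fin.castSucc 0 := rfl
      rw [this, Fin.snoc_castSucc]
      exact ρ.init v
    · -- step_br
      intro i
      refine Fin.lastCases ?_ ?_ i
      · simp only [Fin.snoc_last, Fin.succ_last, Fin.snoc_castSucc]
        rw [RExec.lastLab] at hlast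
        rw [hlast]
        exact step.1
      · intro j
        simp only [Fin.snoc_castSucc, Fin.succ_castSucc]
        exact ρ.step_br j
    · -- step_rcv
      intro i
      refine Fin.lastCases ?_ ?_ i
      · intro v hv
        simp only [Fin.snoc_last] at hv
        simp only [Fin.snoc_last, Fin.succ_last, Fin.snoc_castSucc, Function.update_self]
        rw [RExec.lastLab] at hlast
        rw [hlast]
        constructor
        · intro hE
          rcases hE with ⟨_, _, hne⟩ | ⟨hvs, _⟩
          · rcases step.2 v hv with heq | hrcv
            · exact absurd heq hne
            · exact hrcv
          · exact absurd hvs hv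
        · intro hnE
          by_contra hne
          exact hnE (Or.inl ⟨rfl, hv, hne⟩)
      · intro j v hv
        simp only [Fin.snoc_castSucc] at hv
        simp only [Fin.snoc_castSucc, Fin.succ_castSucc,
          Function.update_of_ne (Fin.castSucc_lt_last j).ne]
        exact ρ.step_rcv j v hv
    · -- lastLab
      simp only [RExec.lastLab]
      exact Fin.snoc_last _ _
    · -- activeLen
      intro v
      have key : (Finset.univ.filter fun i : Fin (r+1) => (Fin.snoc ρ.sender s : Fin (r+1) → ν) i = v).card
          = (Finset.univ.filter fun j : Fin r => ρ.sender j = v).card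
            + (if s = v then 1 else 0) := by
        rw [Finset.card_filter, Finset.card_filter, Fin.sum_univ_castSucc]
        simp [Fin.snoc_castSucc, Fin.snoc_last]
      show (Finset.univ.filter fun i : Fin (r+1) => (Fin.snoc ρ.sender s : Fin (r+1) → ν) i = v).card = _
      rw [key]
      have h2 : (Finset.univ.filter fun j : Fin r => ρ.sender j = v).card = c v := hact v
      rw [h2]
      simp only [Pi.add_apply]
      congr 1
      by_cases hsv : s = v
      · subst hsv; simp
      · have : v ≠ s := fun h => hsv h.symm
        simp [hsv, this]

end RunDef
section Reindex

variable {P : BroadcastProtocol Q M} {ν ν' : Type} [Fintype ν] [DecidableEq ν]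
  [Fintype ν'] [DecidableEq ν'] {r : ℕ}

lemma RExec.sum_activeLen (ρ : RExec P ν r) : ∑ v, ρ.activeLen v = r := by
  classical
  have := Finset.card_eq_sum_card_fiberwise
    (f := ρ.sender) (s := Finset.univ) (t := Finset.univ)
    (fun x _ => Finset.mem_univ _)
  simpa [RExec.activeLen] using this.symm

lemma RExec.reindex (e : ν ≃ ν') (ρ : RExec P ν r) :
    ∃ ρ' : RExec P ν' r, (∀ v', ρ'.lastLab v' = ρ.lastLab (e.symm v')) ∧
      (∀ v', ρ'.activeLen v' = ρ.activeLen (e.symm v')) := by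
  refine ⟨⟨fun i v' => ρ.lab i (e.symm v'),
    fun i a b => ρ.edges i (e.symm a) (e.symm b),
    fun i a b hab => ρ.edges_symm i hab,
    fun i a ha => ρ.edges_irrefl i _ ha,
    fun i => e (ρ.sender i), ρ.msg,
    fun v' => ρ.init _,
    fun i => by simpa using ρ.step_br i,
    fun i v' hv' => ?_⟩, fun v' => rfl, fun v' => ?_⟩
  · have hne : e.symm v' ≠ ρ.sender i := by
      intro hc
      apply hv'
      show v' = e (ρ.sender i)
      rw [← hc, Equiv.apply_symm_apply]
    simpa using ρ.step_rcv i (e.symm v') hne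
  · show (Finset.univ.filter fun i : Fin r => e (ρ.sender i) = v').card = _
    rw [RExec.activeLen]
    congr 1
    apply Finset.filter_congr
    intro i _
    simp [Equiv.apply_eq_iff_eq_symm_apply]

end Reindex
/-- Node type for the constructed execution: one main node plus one potential
helper node per non-initial state. -/
abbrev NT (P : BroadcastProtocol Q M) : Type := PUnit ⊕ {q : Q // q ∉ P.I}

section Claim

variable (P : BroadcastProtocol Q M)

/-- States newly handled at level `n+1` by a reception rule. -/
def NB (n : ℕ) (q : Q) : Prop := Covd P q ∧ minlev P q = n + 1 ∧ IsR P q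

/-- Default demand transformer: move a node demanded at a level-`n+1` state
back to the premise of its rule. -/
noncomputable def ddf (n : ℕ) (d : NT P → Q) : NT P → Q := fun x =>
  if minlev P (d x) = n + 1 then prem P (d x) else d x

open Classical in
/-- Demand at the previous level. -/
noncomputable def d'f (n : ℕ) (d : NT P → Q) : NT P → Q := fun x =>
  match x with
  | Sum.inl _ => ddf P n d x
  | Sum.inr qh => if NB P n qh.1 then bsrc P qh.1 else ddf P n d (Sum.inr qh)

open Classical in
/-- The level-`n+1` state whose processing moves node `x`, if any. -/
noncomputable def govf (n : ℕ) (d : NT P → Q) : NT P → Option Q := fun x =>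
  match x with
  | Sum.inl _ => if minlev P (d x) = n + 1 then some (d x) else none
  | Sum.inr qh =>
      if NB P n qh.1 then some qh.1
      else if minlev P (d (Sum.inr qh)) = n + 1 then some (d (Sum.inr qh)) else none

open Classical in
/-- Intermediate labellings while processing the level-`n+1` states in `S`. -/
noncomputable def LSf (n : ℕ) (d : NT P → Q) (S : Finset Q) : NT P → Q := fun x =>
  if ∃ q ∈ S, govf P n d x = some q then d x else d'f P n d x

variable {P}

lemma gov_none {n : ℕ} {d : NT P → Q} {x : NT P} (hx : govf P n d x = none) :
    d'f P n d x = d x := by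
  classical
  cases x with
  | inl u =>
    simp only [govf] at hx
    split at hx
    · cases hx
    · next h => simp [d'f, ddf, h]
  | inr qh =>
    simp only [govf] at hx
    split at hx
    · cases hx
    · next h =>
      split at hx
      · cases hx
      · next h2 => simp [d'f, ddf, h, h2]

lemma gov_mem {n : ℕ} {d : NT P → Q} (hcov : ∀ x, CovN P (n+1) (d x))
    {x : NT P} {q : Q} (hx : govf P n d x = some q) :
    Covd P q ∧ minlev P q = n + 1 := by
  classical
  cases x with
  | inl u =>
    simp only [govf] at hx
    split at hx
    · next h => cases hx; exact ⟨⟨n+1, hcov _⟩, h⟩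
    · cases hx
  | inr qh =>
    simp only [govf] at hx
    split at hx
    · next h => cases hx; exact ⟨h.1, h.2.1⟩
    · split at hx
      · next h2 => cases hx; exact ⟨⟨n+1, hcov _⟩, h2⟩
      · cases hx

lemma gov_some_d' {n : ℕ} {d : NT P → Q} {x : NT P} {q : Q}
    (hx : govf P n d x = some q) :
    (NB P n q ∧ ∃ hq : q ∉ P.I, x = Sum.inr ⟨q, hq⟩ ∧ d'f P n d x = bsrc P q) ∨
    (d x = q ∧ minlev P (d x) = n + 1 ∧ d'f P n d x = prem P q) := by
  classical
  cases x with
  | inl u =>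
    simp only [govf] at hx
    split at hx
    · next h => cases hx; exact Or.inr ⟨rfl, h, by simp [d'f, ddf, h]⟩
    · cases hx
  | inr qh =>
    simp only [govf] at hx
    split at hx
    · next h =>
      cases hx
      exact Or.inl ⟨h, qh.2, by cases qh; rfl, by simp [d'f, h]⟩
    · next h =>
      split at hx
      · next h2 => cases hx; exact Or.inr ⟨rfl, h2, by simp [d'f, ddf, h, h2]⟩
      · cases hx

end Claim
section Claim2

variable {P : BroadcastProtocol Q M}

lemma LS_empty {n : ℕ} {d : NT P → Q} : LSf P n d ∅ = d'f P n d := by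
  classical
  funext x
  simp [LSf]

lemma prem_eq {q : Q} {r} (h : ruleOf P q = some r) :
    prem P q = (match r with | .inl (p, _) => p | .inr (p, _, _, _) => p) := by
  rcases r with ⟨p, m⟩ | ⟨p, m, p', z⟩ <;> simp [prem, h]

lemma bsrc_eq {q : Q} {p : Q} {m : M} {p' z : Q}
    (h : ruleOf P q = some (.inr (p, m, p', z))) : bsrc P q = p' := by
  unfold bsrc; rw [h]; rfl

lemma zOf_eq {q : Q} {p : Q} {m : M} {p' z : Q}
    (h : ruleOf P q = some (.inr (p, m, p', z))) : zOf P q = z := by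
  unfold zOf; rw [h]; rfl

lemma process_q {n : ℕ} {d : NT P → Q} (hcov : ∀ x, CovN P (n+1) (d x))
    (hbusy : ∀ (q : Q) (hq : q ∉ P.I), Covd P q → minlev P q ≤ n + 1 → IsR P q →
      d (Sum.inr ⟨q, hq⟩) = zOf P q)
    {S : Finset Q} {q : Q} (hc : Covd P q) (hlev : minlev P q = n + 1) (hqS : q ∉ S) :
    ∃ c, Run P (LSf P n d S) (LSf P n d (insert q S)) c ∧
      ∀ x, c x ≤ if govf P n d x = some q then 1 else 0 := by
  classical
  have h0 : 0 < minlev P q := by omega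
  obtain ⟨r, hrule⟩ := ruleOf_isSome hc h0
  have hspec := ruleOf_spec hrule
  have hlev1 : minlev P q - 1 = n := by omega
  -- generic facts
  have hnotS : ∀ x, govf P n d x = some q → ¬ ∃ q' ∈ S, govf P n d x = some q' := by
    rintro x hg ⟨q', hq'S, hgov⟩
    rw [hg] at hgov
    cases hgov
    exact hqS hq'S
  have hLS_of_gov : ∀ x, govf P n d x = some q → LSf P n d S x = d'f P n d x := by
    intro x hg
    simp only [LSf]
    rw [if_neg (hnotS x hg)]
  have hLSins_of_gov : ∀ x, govf P n d x = some q →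
      LSf P n d (insert q S) x = d x := by
    intro x hg
    simp only [LSf]
    rw [if_pos ⟨q, Finset.mem_insert_self q S, hg⟩]
  have hLSins_of_not : ∀ x, ¬ govf P n d x = some q →
      LSf P n d (insert q S) x = LSf P n d S x := by
    intro x hg
    have hiff : (∃ q' ∈ insert q S, govf P n d x = some q') ↔
        (∃ q' ∈ S, govf P n d x = some q') := by
      constructor
      · rintro ⟨q', hq', hgov⟩
        rcases Finset.mem_insert.mp hq' with rfl | hq'S
        · exact absurd hgov hg
        · exact ⟨q', hq'S, hgov⟩
      · rintro ⟨q', hq', hgov⟩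
        exact ⟨q', Finset.mem_insert_of_mem hq', hgov⟩
    simp only [LSf]
    by_cases h2 : ∃ q' ∈ S, govf P n d x = some q'
    · rw [if_pos h2, if_pos (hiff.mpr h2)]
    · rw [if_neg h2, if_neg (fun hh => h2 (hiff.mp hh))]
  rcases r with ⟨p, m⟩ | ⟨p, m, p', z⟩
  · -- broadcast rule
    obtain ⟨hp, hbr⟩ := hspec
    rw [hlev1] at hp
    have hprem : prem P q = p := prem_eq hrule
    have hnotNB : ¬ NB P n q := by
      rintro ⟨-, -, a, b, c', e, hr2⟩
      rw [hrule] at hr2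
      cases hr2
    have hfact : ∀ x, govf P n d x = some q → d x = q ∧ d'f P n d x = p := by
      intro x hg
      rcases gov_some_d' hg with ⟨hnb, -⟩ | ⟨h1, -, h3⟩
      · exact absurd hnb hnotNB
      · exact ⟨h1, by rw [h3, hprem]⟩
    -- inner induction over processed movers
    have inner : ∀ B : Finset (NT P), (∀ x ∈ B, govf P n d x = some q) →
        ∃ c, Run P (LSf P n d S) (fun x => if x ∈ B then d x else LSf P n d S x) c ∧
          ∀ x, c x ≤ if x ∈ B then 1 else 0 := by
      intro B
      induction B using Finset.induction_on with
      | empty =>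
        intro _
        exact ⟨0, (Run.refl _).cast (funext fun x => by simp) rfl, by simp⟩
      | @insert x₀ B hx₀ ih =>
        intro hsub
        obtain ⟨c, hrun, hcb⟩ := ih (fun x hx => hsub x (Finset.mem_insert_of_mem hx))
        have hgx₀ : govf P n d x₀ = some q := hsub x₀ (Finset.mem_insert_self _ _)
        obtain ⟨hdx₀, hd'x₀⟩ := hfact x₀ hgx₀
        have step : OneStep P (fun x => if x ∈ B then d x else LSf P n d S x) x₀ m
            (fun x => if x ∈ insert x₀ B then d x else LSf P n d S x) := by
          constructor
          · show P.br (if x₀ ∈ B then d x₀ else LSf P n d S x₀) m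
              (if x₀ ∈ insert x₀ B then d x₀ else LSf P n d S x₀)
            rw [if_neg hx₀, if_pos (Finset.mem_insert_self _ _),
              hLS_of_gov x₀ hgx₀, hd'x₀, hdx₀]
            exact hbr
          · intro v hv
            left
            show (if v ∈ insert x₀ B then d v else LSf P n d S v) =
              (if v ∈ B then d v else LSf P n d S v)
            by_cases hvB : v ∈ B
            · rw [if_pos hvB, if_pos (Finset.mem_insert_of_mem hvB)]
            · rw [if_neg hvB, if_neg (fun hh => by
                rcases Finset.mem_insert.mp hh with rfl | hh2
                · exact hv rfl
                · exact hvB hh2)]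
        refine ⟨_, hrun.comp (Run.single step), ?_⟩
        intro x
        have h1 := hcb x
        by_cases hxx : x = x₀
        · subst hxx
          rw [if_neg hx₀] at h1
          rw [if_pos (Finset.mem_insert_self _ _)]
          show c x + (if x = x then 1 else 0) ≤ 1
          rw [if_pos rfl]
          omega
        · have : x ∈ insert x₀ B ↔ x ∈ B := by
            constructor
            · intro hh; rcases Finset.mem_insert.mp hh with rfl | hh2
              · exact absurd rfl hxx
              · exact hh2
            · exact Finset.mem_insert_of_mem
          simp only [Pi.add_apply, if_neg hxx]
          by_cases hxB : x ∈ B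
          · rw [if_pos (this.mpr hxB)]; rw [if_pos hxB] at h1; omega
          · rw [if_neg (fun hh => hxB (this.mp hh))]; rw [if_neg hxB] at h1; omega
    obtain ⟨c, hrun, hcb⟩ := inner (Finset.univ.filter fun x => govf P n d x = some q)
      (fun x hx => (Finset.mem_filter.mp hx).2)
    have hfin : (fun x => if x ∈ (Finset.univ.filter fun x => govf P n d x = some q)
        then d x else LSf P n d S x) = LSf P n d (insert q S) := by
      funext x
      simp only [Finset.mem_filter, Finset.mem_univ, true_and]
      by_cases hg : govf P n d x = some q
      · rw [if_pos hg, hLSins_of_gov x hg]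
      · rw [if_neg hg, hLSins_of_not x hg]
    refine ⟨c, hrun.cast hfin rfl, ?_⟩
    intro x
    have := hcb x
    simp only [Finset.mem_filter, Finset.mem_univ, true_and] at this
    by_cases hg : govf P n d x = some q
    · rw [if_pos hg] at this; rw [if_pos hg]; omega
    · rw [if_neg hg] at this; rw [if_neg hg]; omega
  · -- reception rule
    obtain ⟨hp, hrcv, hp', hbr⟩ := hspec
    rw [hlev1] at hp hp'
    have hprem : prem P q = p := prem_eq hrule
    have hbsrc : bsrc P q = p' := bsrc_eq hrule
    have hzof : zOf P q = z := zOf_eq hrule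
    have hIsR : IsR P q := ⟨p, m, p', z, hrule⟩
    have hNB : NB P n q := ⟨hc, hlev, hIsR⟩
    have hqI : q ∉ P.I := not_mem_I_of_minlev_pos hc h0
    set s₀ : NT P := Sum.inr ⟨q, hqI⟩ with hs₀
    have hgov_s₀ : govf P n d s₀ = some q := by simp [hs₀, govf, hNB]
    have hd_s₀ : d s₀ = z := by rw [hbusy q hqI hc (le_of_eq hlev) hIsR, hzof]
    have hd'_s₀ : d'f P n d s₀ = p' := by simp [hs₀, d'f, hNB, hbsrc]
    have step : OneStep P (LSf P n d S) s₀ m (LSf P n d (insert q S)) := by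
      constructor
      · rw [hLS_of_gov s₀ hgov_s₀, hd'_s₀, hLSins_of_gov s₀ hgov_s₀, hd_s₀]
        exact hbr
      · intro v hv
        by_cases hg : govf P n d v = some q
        · rcases gov_some_d' hg with ⟨-, hq2, hveq, -⟩ | ⟨h1, -, h3⟩
          · exact absurd hveq hv
          · right
            rw [hLS_of_gov v hg, h3, hprem, hLSins_of_gov v hg, h1]
            exact hrcv
        · left
          exact hLSins_of_not v hg
    refine ⟨_, Run.single step, ?_⟩
    intro x
    by_cases hxx : x = s₀
    · subst hxx; rw [if_pos rfl, if_pos hgov_s₀]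
    · rw [if_neg hxx]
      split <;> omega

end Claim2
section MainClaim

variable {P : BroadcastProtocol Q M}

open Classical in
lemma LS_full {n : ℕ} {d : NT P → Q} (hcov : ∀ x, CovN P (n+1) (d x)) :
    LSf P n d (Finset.univ.filter fun q => Covd P q ∧ minlev P q = n + 1) = d := by
  classical
  funext x
  simp only [LSf]
  by_cases hg : ∃ q, govf P n d x = some q
  · obtain ⟨q, hq⟩ := hg
    obtain ⟨h1, h2⟩ := gov_mem hcov hq
    rw [if_pos ⟨q, Finset.mem_filter.mpr ⟨Finset.mem_univ _, h1, h2⟩, hq⟩]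
  · have hnone : govf P n d x = none := by
      cases hh : govf P n d x with
      | none => rfl
      | some q => exact absurd ⟨q, hh⟩ hg
    rw [if_neg (by rintro ⟨q', -, hq'⟩; exact hg ⟨q', hq'⟩)]
    exact gov_none hnone

lemma main_claim (n : ℕ) : ∀ (d : NT P → Q), (∀ x, CovN P n (d x)) →
    (∀ (q : Q) (hq : q ∉ P.I), Covd P q → minlev P q ≤ n → IsR P q →
      d (Sum.inr ⟨q, hq⟩) = zOf P q) →
    ∃ (L0 : NT P → Q) (c : NT P → ℕ), (∀ x, L0 x ∈ P.I) ∧ Run P L0 d c ∧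
      ∀ x, c x ≤ n := by
  classical
  induction n with
  | zero =>
    intro d hcov _
    exact ⟨d, 0, fun x => hcov x, Run.refl d, fun x => le_rfl⟩
  | succ n ih =>
    intro d hcov hbusy
    -- the demand at the previous level satisfies the recursion preconditions
    have hddf : ∀ x, minlev P (d x) ≠ n + 1 → ddf P n d x = d x := by
      intro x hx; simp [ddf, hx]
    have hddf2 : ∀ x, minlev P (d x) = n + 1 → ddf P n d x = prem P (d x) := by
      intro x hx; simp [ddf, hx]
    have hcovd : ∀ x, Covd P (d x) := fun x => ⟨n+1, hcov x⟩
    have hddf_cov : ∀ x, CovN P n (ddf P n d x) := by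
      intro x
      by_cases hml : minlev P (d x) = n + 1
      · rw [hddf2 x hml]
        have := prem_cov (hcovd x) (by omega)
        rwa [hml, Nat.add_sub_cancel] at this
      · rw [hddf x hml]
        have hle : minlev P (d x) ≤ n := by
          have := minlev_le (hcov x); omega
        exact covN_mono hle (covN_minlev (hcovd x))
    have hcov' : ∀ x, CovN P n (d'f P n d x) := by
      intro x
      cases x with
      | inl u => exact hddf_cov _
      | inr qh =>
        by_cases hnb : NB P n qh.1
        · have : d'f P n d (Sum.inr qh) = bsrc P qh.1 := by simp [d'f, hnb]
          rw [this]
          obtain ⟨hcq, hlq, p, m, p', z, hr⟩ := hnb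
          have := bsrc_cov hr
          rwa [hlq, Nat.add_sub_cancel] at this
        · have : d'f P n d (Sum.inr qh) = ddf P n d (Sum.inr qh) := by simp [d'f, hnb]
          rw [this]
          exact hddf_cov _
    have hbusy' : ∀ (q : Q) (hq : q ∉ P.I), Covd P q → minlev P q ≤ n → IsR P q →
        d'f P n d (Sum.inr ⟨q, hq⟩) = zOf P q := by
      intro q hq hcq hml hisr
      have h0 : 0 < minlev P q := minlev_pos hq hcq
      have hnb : ¬ NB P n q := by rintro ⟨-, heq, -⟩; omega
      have hdz : d (Sum.inr ⟨q, hq⟩) = zOf P q :=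
        hbusy q hq hcq (by omega) hisr
      have hmlz : minlev P (d (Sum.inr ⟨q, hq⟩)) ≠ n + 1 := by
        rw [hdz]
        have := minlev_le (zOf_cov hcq h0 hisr)
        omega
      have : d'f P n d (Sum.inr ⟨q, hq⟩) = ddf P n d (Sum.inr ⟨q, hq⟩) := by
        simp [d'f, hnb]
      rw [this, hddf _ hmlz, hdz]
    obtain ⟨L0, c', hL0, hrun', hc'⟩ := ih (d'f P n d) hcov' hbusy'
    -- process all states of minimal level n+1
    have process_all : ∀ S : Finset Q, (∀ q ∈ S, Covd P q ∧ minlev P q = n + 1) →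
        ∃ c, Run P (d'f P n d) (LSf P n d S) c ∧
          ∀ x, c x ≤ if (∃ q ∈ S, govf P n d x = some q) then 1 else 0 := by
      intro S
      induction S using Finset.induction_on with
      | empty =>
        intro _
        refine ⟨0, (Run.refl _).cast LS_empty.symm rfl, by simp⟩
      | @insert q S hqS ih2 =>
        intro hsub
        obtain ⟨c, hrun, hcb⟩ := ih2 (fun q' hh => hsub q' (Finset.mem_insert_of_mem hh))
        obtain ⟨hcq, hlq⟩ := hsub q (Finset.mem_insert_self _ _)
        obtain ⟨c2, hrun2, hcb2⟩ := process_q hcov hbusy hcq hlq hqS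
        refine ⟨_, hrun.comp hrun2, ?_⟩
        intro x
        have h1 := hcb x
        have h2 := hcb2 x
        simp only [Pi.add_apply]
        by_cases hg : govf P n d x = some q
        · rw [if_pos hg] at h2
          rw [if_pos ⟨q, Finset.mem_insert_self _ _, hg⟩]
          have : ¬ ∃ q' ∈ S, govf P n d x = some q' := by
            rintro ⟨q', hq', hgov⟩
            rw [hg] at hgov
            cases hgov
            exact hqS hq'
          rw [if_neg this] at h1
          omega
        · rw [if_neg hg] at h2
          by_cases hS : ∃ q' ∈ S, govf P n d x = some q'
          · rw [if_pos hS] at h1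
            obtain ⟨q', hq', hgov⟩ := hS
            rw [if_pos ⟨q', Finset.mem_insert_of_mem hq', hgov⟩]
            omega
          · rw [if_neg hS] at h1
            rw [if_neg (by
              rintro ⟨q', hq', hgov⟩
              rcases Finset.mem_insert.mp hq' with rfl | hh
              · exact hg hgov
              · exact hS ⟨q', hh, hgov⟩)]
            omega
    obtain ⟨cA, hrunA, hcbA⟩ := process_all
      (Finset.univ.filter fun q => Covd P q ∧ minlev P q = n + 1)
      (fun q hq => (Finset.mem_filter.mp hq).2)
    have hfull := LS_full hcov
    refine ⟨L0, c' + cA, hL0, (hrun'.comp (hrunA.cast hfull rfl)), ?_⟩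
    intro x
    have := hc' x
    have h2 := hcbA x
    simp only [Pi.add_apply]
    split at h2 <;> omega

end MainClaim
end Aux
/-- **Refined upper bounds for reconfigurable networks.** If some reconfigurable
execution of `P` covers `F`, then there is a reconfigurable execution covering `F`
with at most `2|Q| - |I|` nodes, in which every node broadcasts at most `|Q| - |I|`
times, and consequently of length at most `(2|Q| - |I|)·(|Q| - |I|)`. -/
theorem refined_upper_bounds_reconfigurable
    {Q M : Type} [Fintype Q] [DecidableEq Q] [Fintype M] (P : BroadcastProtocol Q M)
    (F : Set Q) (ν : Type) [Fintype ν] [DecidableEq ν]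
    (r₀ : ℕ) (ρ₀ : RExec P ν r₀) (h : ρ₀.Covers F) :
    ∃ (k r : ℕ) (ρ : RExec P (Fin k) r), ρ.Covers F ∧
      k ≤ 2 * Fintype.card Q - P.I.card ∧
      (∀ v, ρ.activeLen v ≤ Fintype.card Q - P.I.card) ∧
      r ≤ (2 * Fintype.card Q - P.I.card) * (Fintype.card Q - P.I.card) := by
  classical
  obtain ⟨v₀, hv₀⟩ := h
  set T := Fintype.card Q - P.I.card with hT
  have hq₀ : ρ₀.lab 0 v₀ ∈ P.I := ρ₀.init v₀
  set q₀ : Q := ρ₀.lab 0 v₀ with hq₀def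
  obtain ⟨nf, hnf⟩ := exec_labels_cov ρ₀ (Fin.last r₀)
  set f : Q := ρ₀.lastLab v₀ with hfdef
  have hfT : CovN P T f := covN_bound (hnf v₀)
  -- the demand
  set d : NT P → Q := fun x =>
    match x with
    | Sum.inl _ => f
    | Sum.inr ⟨q, _⟩ => if Covd P q ∧ minlev P q ≤ T ∧ IsR P q then zOf P q else q₀
    with hd
  have hcov : ∀ x, CovN P T (d x) := by
    intro x
    cases x with
    | inl u => exact hfT
    | inr qh =>
      obtain ⟨q, hq⟩ := qh
      show CovN P T (if Covd P q ∧ minlev P q ≤ T ∧ IsR P q then zOf P q else q₀)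
      by_cases hb : Covd P q ∧ minlev P q ≤ T ∧ IsR P q
      · rw [if_pos hb]
        obtain ⟨hcq, hml, hisr⟩ := hb
        exact covN_mono hml (zOf_cov hcq (minlev_pos hq hcq) hisr)
      · rw [if_neg hb]
        exact covN_mono (Nat.zero_le _) hq₀
  have hbusy : ∀ (q : Q) (hq : q ∉ P.I), Covd P q → minlev P q ≤ T → IsR P q →
      d (Sum.inr ⟨q, hq⟩) = zOf P q := by
    intro q hq hcq hml hisr
    show (if Covd P q ∧ minlev P q ≤ T ∧ IsR P q then zOf P q else q₀) = zOf P q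
    rw [if_pos ⟨hcq, hml, hisr⟩]
  obtain ⟨L0, c, hL0, hrun, hc⟩ := main_claim T d hcov hbusy
  obtain ⟨r, ρ, hlast, hact⟩ := run_to_exec hrun hL0
  set k := Fintype.card (NT P) with hk
  set e := Fintype.equivFin (NT P) with he
  obtain ⟨ρ', hlast', hact'⟩ := ρ.reindex e
  have hQpos : 1 ≤ Fintype.card Q := Fintype.card_pos_iff.mpr ⟨f⟩
  have hIle : P.I.card ≤ Fintype.card Q := by
    simpa using Finset.card_le_card (Finset.subset_univ P.I)
  have hkval : k = 1 + (Fintype.card Q - P.I.card) := by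
    rw [hk]
    have h1 : Fintype.card (NT P) = 1 + Fintype.card {q : Q // q ∉ P.I} := by
      simp [NT]
    have h2 : Fintype.card {q : Q // q ∉ P.I} = Fintype.card Q - P.I.card := by
      rw [Fintype.card_subtype_compl]
      congr 1
      simp [Fintype.card_subtype]
    rw [h1, h2]
  refine ⟨k, r, ρ', ?_, ?_, ?_, ?_⟩
  · refine ⟨e (Sum.inl PUnit.unit), ?_⟩
    rw [hlast' (e (Sum.inl PUnit.unit)), Equiv.symm_apply_apply, hlast]
    exact hv₀
  · omega
  · intro v
    rw [hact' v, hact]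
    exact hc _
  · have hsum := ρ.sum_activeLen
    have : ∑ v, ρ.activeLen v ≤ k * T := by
      calc ∑ v, ρ.activeLen v ≤ ∑ _v : NT P, T :=
            Finset.sum_le_sum (fun v _ => by rw [hact]; exact hc v)
        _ = k * T := by simp [hk, mul_comm]
    have hkb : k ≤ 2 * Fintype.card Q - P.I.card := by omega
    calc r = ∑ v, ρ.activeLen v := hsum.symm
      _ ≤ k * T := this
      _ ≤ (2 * Fintype.card Q - P.I.card) * T := Nat.mul_le_mul_right _ hkb
end

section
/- Correctness of the saturation construction for lossy networks: for every broadcast protocol B = (Q, I, Σ, Δ) and every state q ∈ Q, q belongs to the saturation set S(B) if and only if there exists a lossy execution of B covering {q}. Consequently, for any F ⊆ Q, there exists a lossy execution covering F if and only if F ∩ S(B) ≠ ∅. -/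
section Execs
variable {Q M : Type} [Fintype Q] [DecidableEq Q] [Fintype M]

/-- A lossy execution of length `r` over the finite node type `ν`: the communication
topology `E` is fixed throughout, and in the `i`-th step node `sender i` broadcasts
message `msg i`, which is lost (reaching no node) iff `lost i = true`. -/
structure LExec (P : BroadcastProtocol Q M) (ν : Type) [Fintype ν] [DecidableEq ν]
    (r : ℕ) where
  lab : Fin (r + 1) → ν → Q
  E : ν → ν → Prop
  E_symm : Symmetric E
  E_irrefl : Irreflexive E
  sender : Fin r → ν
  msg : Fin r → M
  lost : Fin r → Bool
  init : ∀ v, lab 0 v ∈ P.I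
  step_br : ∀ i : Fin r, P.br (lab i.castSucc (sender i)) (msg i) (lab i.succ (sender i))
  step_lost : ∀ i : Fin r, lost i = true → ∀ v, v ≠ sender i →
    lab i.succ v = lab i.castSucc v
  step_real : ∀ i : Fin r, lost i = false → ∀ v, v ≠ sender i →
    (E (sender i) v → P.rcv (lab i.castSucc v) (msg i) (lab i.succ v)) ∧
    (¬ E (sender i) v → lab i.succ v = lab i.castSucc v)

namespace LExec

variable {P : BroadcastProtocol Q M} {ν : Type} [Fintype ν] [DecidableEq ν] {r : ℕ}

/-- Labelling of the last configuration. -/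
def lastLab (ρ : LExec P ν r) : ν → Q := ρ.lab (Fin.last r)

/-- The execution covers `F` if a node of the last configuration is labelled in `F`. -/
def Covers (ρ : LExec P ν r) (F : Set Q) : Prop := ∃ v, ρ.lastLab v ∈ F

/-- The active length of node `v`: the number of broadcasts (lost or not) of `v`. -/
def activeLen (ρ : LExec P ν r) (v : ν) : ℕ :=
  (Finset.univ.filter fun i : Fin r => ρ.sender i = v).card

/-- The real active length of node `v`: the number of non-lost broadcasts of `v`. -/
def realActiveLen (ρ : LExec P ν r) (v : ν) : ℕ :=
  (Finset.univ.filter fun i : Fin r => ρ.sender i = v ∧ ρ.lost i = false).card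

end LExec

end Execs
section MyAux
variable {Q M : Type} [Fintype Q] [DecidableEq Q] [Fintype M]

/-- One lossy step on configurations over topology `E`; nodes in `A` are
forbidden to do non-lost broadcasts. -/
def LStep (P : BroadcastProtocol Q M) {ν : Type} (E : ν → ν → Prop) (A : Set ν)
    (c c' : ν → Q) : Prop :=
  ∃ s m, P.br (c s) m (c' s) ∧
    ((∀ w, w ≠ s → c' w = c w) ∨
     (s ∉ A ∧ ∀ w, w ≠ s → (E s w → P.rcv (c w) m (c' w)) ∧ (¬ E s w → c' w = c w)))

/-- Soundness: every label occurring in a lossy execution is saturated. -/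
theorem lab_sat {P : BroadcastProtocol Q M} {ν : Type} [Fintype ν] [DecidableEq ν]
    {r : ℕ} (ρ : LExec P ν r) : ∀ (i : Fin (r+1)) (v : ν), Sat P (ρ.lab i v) := by
  intro i
  induction i using Fin.induction with
  | zero => exact fun v => Sat.base _ (ρ.init v)
  | succ i IH =>
    intro v
    by_cases hv : v = ρ.sender i
    · rw [hv]
      exact Sat.broadcast _ (ρ.msg i) _ (IH _) (ρ.step_br i)
    · cases hl : ρ.lost i with
      | true => rw [ρ.step_lost i hl v hv]; exact IH v
      | false =>
        by_cases he : ρ.E (ρ.sender i) v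
        · exact Sat.reception _ (ρ.msg i) _ _ _ (IH (ρ.sender i))
            (Sat.broadcast _ (ρ.msg i) _ (IH (ρ.sender i)) (ρ.step_br i))
            (IH v) (ρ.step_br i) ((ρ.step_real i hl v hv).1 he)
        · rw [(ρ.step_real i hl v hv).2 he]; exact IH v

/-- Converting a chain of lossy steps into an `LExec`. -/
theorem toExec {P : BroadcastProtocol Q M} {ν : Type} [Fintype ν] [DecidableEq ν]
    {E : ν → ν → Prop} (hsym : Symmetric E) (hirr : Irreflexive E) {A : Set ν}
    {c0 c : ν → Q} (hreach : Relation.ReflTransGen (LStep P E A) c0 c)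
    (hinit : ∀ v, c0 v ∈ P.I) :
    ∃ (r : ℕ) (ρ : LExec P ν r), ρ.E = E ∧ ρ.lastLab = c := by
  induction hreach with
  | refl =>
    refine ⟨0, ⟨fun _ => c0, E, hsym, hirr, Fin.elim0, Fin.elim0, Fin.elim0,
      fun v => hinit v, fun i => i.elim0, fun i => i.elim0, fun i => i.elim0⟩, rfl, rfl⟩
  | @tail b c hab hbc IH =>
    obtain ⟨r, ρ, hE, hρ⟩ := IH
    obtain ⟨s, m, hbr, hcase⟩ := hbc
    rcases hcase with h | h
    · -- lost step
      refine ⟨r+1, ⟨Fin.snoc ρ.lab c, ρ.E, ρ.E_symm, ρ.E_irrefl,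
        Fin.snoc ρ.sender s, Fin.snoc ρ.msg m, Fin.snoc ρ.lost true, ?_, ?_, ?_, ?_⟩, hE, ?_⟩
      · intro v
        have : (0 : Fin (r+1+1)) = Fin.castSucc 0 := rfl
        rw [this, Fin.snoc_castSucc]; exact ρ.init v
      · intro i
        induction i using Fin.lastCases with
        | last =>
          rw [Fin.succ_last]
          simp only [Fin.snoc_castSucc, Fin.snoc_last]
          have : ρ.lab (Fin.last r) = b := hρ
          rw [this]; exact hbr
        | cast j =>
          rw [Fin.succ_castSucc]
          simp only [Fin.snoc_castSucc]
          exact ρ.step_br j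
      · intro i hl v hv
        induction i using Fin.lastCases with
        | last =>
          rw [Fin.succ_last]
          simp only [Fin.snoc_castSucc, Fin.snoc_last] at *
          have : ρ.lab (Fin.last r) = b := hρ
          rw [this]; exact h v hv
        | cast j =>
          rw [Fin.succ_castSucc]
          simp only [Fin.snoc_castSucc] at *
          exact ρ.step_lost j hl v hv
      · intro i hl v hv
        induction i using Fin.lastCases with
        | last => simp at hl
        | cast j =>
          rw [Fin.succ_castSucc]
          simp only [Fin.snoc_castSucc] at *
          exact ρ.step_real j hl v hv
      · simp [LExec.lastLab]
    · -- real step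
      refine ⟨r+1, ⟨Fin.snoc ρ.lab c, ρ.E, ρ.E_symm, ρ.E_irrefl,
        Fin.snoc ρ.sender s, Fin.snoc ρ.msg m, Fin.snoc ρ.lost false, ?_, ?_, ?_, ?_⟩, hE, ?_⟩
      · intro v
        have : (0 : Fin (r+1+1)) = Fin.castSucc 0 := rfl
        rw [this, Fin.snoc_castSucc]; exact ρ.init v
      · intro i
        induction i using Fin.lastCases with
        | last =>
          rw [Fin.succ_last]
          simp only [Fin.snoc_castSucc, Fin.snoc_last]
          have : ρ.lab (Fin.last r) = b := hρ
          rw [this]; exact hbr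
        | cast j =>
          rw [Fin.succ_castSucc]
          simp only [Fin.snoc_castSucc]
          exact ρ.step_br j
      · intro i hl v hv
        induction i using Fin.lastCases with
        | last => simp at hl
        | cast j =>
          rw [Fin.succ_castSucc]
          simp only [Fin.snoc_castSucc] at *
          exact ρ.step_lost j hl v hv
      · intro i hl v hv
        induction i using Fin.lastCases with
        | last =>
          rw [Fin.succ_last]
          simp only [Fin.snoc_castSucc, Fin.snoc_last] at *
          have hb : ρ.lab (Fin.last r) = b := hρ
          rw [hb, hE]
          exact h.2 v hv
        | cast j =>
          rw [Fin.succ_castSucc]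
          simp only [Fin.snoc_castSucc] at *
          exact ρ.step_real j hl v hv
      · simp [LExec.lastLab]

end MyAux

section MyAux2
variable {Q M : Type} [Fintype Q] [DecidableEq Q] [Fintype M]

/-- Completeness: every saturated state is reachable by a chain of lossy steps
in which the distinguished node does only lost broadcasts. -/
theorem sat_reach_s6 {P : BroadcastProtocol Q M} (q : Q) (h : Sat P q) :
    ∃ (ν : Type) (_ : Fintype ν) (_ : DecidableEq ν) (E : ν → ν → Prop),
      Symmetric E ∧ Irreflexive E ∧
      ∃ (c0 c : ν → Q) (v : ν),
        (∀ w, c0 w ∈ P.I) ∧ Relation.ReflTransGen (LStep P E {v}) c0 c ∧ c v = q := by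
  classical
  induction h with
  | base q hq =>
    exact ⟨Unit, inferInstance, inferInstance, fun _ _ => False,
      fun _ _ h => h.elim, fun _ h => h, fun _ => q, fun _ => q, (),
      fun _ => hq, Relation.ReflTransGen.refl, rfl⟩
  | broadcast q₁ m q₂ h1 hbr IH =>
    obtain ⟨ν, iF, iD, E, hsym, hirr, c0, c, v, hinit, hreach, hcv⟩ := IH
    letI := iD
    refine ⟨ν, iF, iD, E, hsym, hirr, c0, Function.update c v q₂, v, hinit, ?_, ?_⟩
    · refine hreach.tail ⟨v, m, ?_, Or.inl ?_⟩
      · rw [Function.update_self, hcv]; exact hbr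
      · intro w hw; exact Function.update_of_ne hw _ _
    · simp
  | reception q₁ m q₂ p₁ p₂ h1 h2 h3 hbr hrcv IH1 IH2 IH3 =>
    clear IH2
    obtain ⟨ν₁, iF1, iD1, E₁, hsym1, hirr1, c01, c1, a, hinit1, hr1, hca⟩ := IH1
    obtain ⟨ν₂, iF2, iD2, E₂, hsym2, hirr2, c02, c2, b, hinit2, hr2, hcb⟩ := IH3
    letI := iF1; letI := iD1; letI := iF2; letI := iD2
    let E : ν₁ ⊕ ν₂ → ν₁ ⊕ ν₂ → Prop := fun x y =>
      match x, y with
      | .inl x, .inl y => E₁ x y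
      | .inl x, .inr y => x = a ∧ y = b
      | .inr x, .inl y => x = b ∧ y = a
      | .inr x, .inr y => E₂ x y
    have hsym : Symmetric E := by
      rintro (x | x) (y | y) h
      · exact hsym1 h
      · exact ⟨h.2, h.1⟩
      · exact ⟨h.2, h.1⟩
      · exact hsym2 h
    have hirr : Irreflexive E := by
      rintro (x | x) h
      · exact hirr1 x h
      · exact hirr2 x h
    let cf : ν₁ ⊕ ν₂ → Q := fun x =>
      match x with
      | .inl w => if w = a then q₂ else
          if E₁ a w then Classical.choose (P.complete (c1 w) m) else c1 w
      | .inr w => if w = b then p₂ else c2 w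
    refine ⟨ν₁ ⊕ ν₂, inferInstance, inferInstance, E, hsym, hirr,
      Sum.elim c01 c02, cf, Sum.inr b, ?_, ?_, ?_⟩
    · rintro (w | w)
      · exact hinit1 w
      · exact hinit2 w
    · -- phase 1 : run the ν₁ execution
      have phase1 : Relation.ReflTransGen (LStep P E {Sum.inr b})
          (Sum.elim c01 c02) (Sum.elim c1 c02) := by
        refine Relation.ReflTransGen.lift (fun c => Sum.elim c c02) ?_ _ _ hr1
        rintro c c' ⟨s, m', hbr', hc⟩
        refine ⟨Sum.inl s, m', hbr', ?_⟩
        rcases hc with hl | ⟨hsA, hre⟩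
        · refine Or.inl ?_
          rintro (w | w) hw
          · exact hl w (fun e => hw (by rw [e]))
          · rfl
        · refine Or.inr ⟨by simp, ?_⟩
          rintro (w | w) hw
          · exact hre w (fun e => hw (by rw [e]))
          · constructor
            · rintro ⟨hsa, _⟩
              exact absurd (Set.mem_singleton_iff.mpr hsa) hsA
            · intro _; rfl
      -- phase 2 : run the ν₂ execution
      have phase2 : Relation.ReflTransGen (LStep P E {Sum.inr b})
          (Sum.elim c1 c02) (Sum.elim c1 c2) := by
        refine Relation.ReflTransGen.lift (fun d => Sum.elim c1 d) ?_ _ _ hr2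
        rintro d d' ⟨s, m', hbr', hc⟩
        refine ⟨Sum.inr s, m', hbr', ?_⟩
        rcases hc with hl | ⟨hsA, hre⟩
        · refine Or.inl ?_
          rintro (w | w) hw
          · rfl
          · exact hl w (fun e => hw (by rw [e]))
        · have hsb : s ≠ b := fun e => hsA (Set.mem_singleton_iff.mpr e)
          refine Or.inr ⟨by simp [hsb], ?_⟩
          rintro (w | w) hw
          · constructor
            · rintro ⟨hsb', _⟩; exact absurd hsb' hsb
            · intro _; rfl
          · exact hre w (fun e => hw (by rw [e]))
      -- final step : `a` broadcasts `m` for real, `b` receives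
      refine (phase1.trans phase2).tail ⟨Sum.inl a, m, ?_, Or.inr ⟨by simp, ?_⟩⟩
      · show P.br (c1 a) m (cf (Sum.inl a))
        have : cf (Sum.inl a) = q₂ := if_pos rfl
        rw [this, hca]; exact hbr
      · rintro (w | w) hw
        · have hwa : w ≠ a := fun e => hw (by rw [e])
          constructor
          · intro he
            show P.rcv (c1 w) m (cf (Sum.inl w))
            have : cf (Sum.inl w) = Classical.choose (P.complete (c1 w) m) := by
              show (if w = a then q₂ else if E₁ a w then _ else c1 w) = _
              rw [if_neg hwa, if_pos he]
            rw [this]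
            exact Classical.choose_spec (P.complete (c1 w) m)
          · intro hne
            show cf (Sum.inl w) = c1 w
            have hne' : ¬ E₁ a w := hne
            show (if w = a then q₂ else if E₁ a w then _ else c1 w) = c1 w
            rw [if_neg hwa, if_neg hne']
        · constructor
          · rintro ⟨_, hyb⟩
            subst hyb
            show P.rcv (c2 w) m (cf (Sum.inr w))
            have : cf (Sum.inr w) = p₂ := if_pos rfl
            rw [this, hcb]; exact hrcv
          · intro hne
            have hwb : w ≠ b := fun e => hne ⟨rfl, e⟩
            show cf (Sum.inr w) = c2 w
            show (if w = b then p₂ else c2 w) = c2 w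
            rw [if_neg hwb]
    · show cf (Sum.inr b) = p₂
      exact if_pos rfl

/-- Relabelling an execution along an equivalence of node types. -/
def LExec.reindex {P : BroadcastProtocol Q M} {ν ν' : Type} [Fintype ν] [DecidableEq ν]
    [Fintype ν'] [DecidableEq ν'] {r : ℕ} (e : ν' ≃ ν) (ρ : LExec P ν r) :
    LExec P ν' r where
  lab i w := ρ.lab i (e w)
  E x y := ρ.E (e x) (e y)
  E_symm := fun x y h => ρ.E_symm h
  E_irrefl := fun x h => ρ.E_irrefl (e x) h
  sender i := e.symm (ρ.sender i)
  msg := ρ.msg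
  lost := ρ.lost
  init w := ρ.init (e w)
  step_br i := by simpa using ρ.step_br i
  step_lost i hl w hw := by
    have hw' : e w ≠ ρ.sender i := fun hc => hw (by show w = e.symm (ρ.sender i); rw [← hc, Equiv.symm_apply_apply])
    exact ρ.step_lost i hl (e w) hw'
  step_real i hl w hw := by
    have hw' : e w ≠ ρ.sender i := fun hc => hw (by show w = e.symm (ρ.sender i); rw [← hc, Equiv.symm_apply_apply])
    simpa using ρ.step_real i hl (e w) hw'

end MyAux2

/-- **Correctness of the saturation construction for lossy networks.**
A state `q` belongs to the saturation set `S(B)` iff some lossy execution covers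
`{q}`; consequently, a set `F` of states is coverable by a lossy execution iff `F`
meets the saturation set. -/
theorem saturation_correct_lossy
    {Q M : Type} [Fintype Q] [DecidableEq Q] [Fintype M] (P : BroadcastProtocol Q M) :
    (∀ q : Q, Sat P q ↔ ∃ (k r : ℕ) (ρ : LExec P (Fin k) r), ρ.Covers {q}) ∧
    (∀ F : Set Q,
      (∃ (k r : ℕ) (ρ : LExec P (Fin k) r), ρ.Covers F) ↔ ∃ q ∈ F, Sat P q) := by
  classical
  have main : ∀ q : Q, Sat P q → ∃ (k r : ℕ) (ρ : LExec P (Fin k) r), ρ.Covers {q} := by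
    intro q hq
    obtain ⟨ν, iF, iD, E, hsym, hirr, c0, c, v, hinit, hreach, hcv⟩ := sat_reach_s6 q hq
    letI := iF; letI := iD
    obtain ⟨r, ρ, hE, hlast⟩ := toExec hsym hirr hreach hinit
    refine ⟨Fintype.card ν, r, ρ.reindex (Fintype.equivFin ν).symm,
      (Fintype.equivFin ν) v, ?_⟩
    show (ρ.reindex (Fintype.equivFin ν).symm).lab (Fin.last r)
      ((Fintype.equivFin ν) v) ∈ ({q} : Set Q)
    show ρ.lab (Fin.last r) ((Fintype.equivFin ν).symm ((Fintype.equivFin ν) v)) ∈ _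
    rw [Equiv.symm_apply_apply]
    have : ρ.lab (Fin.last r) v = c v := congrFun hlast v
    rw [this, hcv]
    exact Set.mem_singleton q
  have sound : ∀ (k r : ℕ) (ρ : LExec P (Fin k) r) (v : Fin k), Sat P (ρ.lastLab v) :=
    fun k r ρ v => lab_sat ρ (Fin.last r) v
  constructor
  · intro q
    constructor
    · exact main q
    · rintro ⟨k, r, ρ, v, hv⟩
      have h := sound k r ρ v
      rwa [Set.mem_singleton_iff.mp hv] at h
  · intro F
    constructor
    · rintro ⟨k, r, ρ, v, hv⟩
      exact ⟨ρ.lastLab v, hv, sound k r ρ v⟩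
    · rintro ⟨q, hqF, hs⟩
      obtain ⟨k, r, ρ, v, hv⟩ := main q hs
      exact ⟨k, r, ρ, v, by rw [Set.mem_singleton_iff.mp hv]; exact hqF⟩
end
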